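/- arXiv:1211.7259 — 6 statements merged into one kernel-verified Lean document; each statement's English description precedes it below -/
import Mathlib

section
/- Let k, l be integers with 1 ≤ l < k, set p = k/l, and let r be a real number with 0 < r ≤ p. Define α_j = j/l for 1 ≤ j ≤ l and α_j = (r + j − l)/(k − l) for l + 1 ≤ j ≤ k, and β_j = (r + j − 1)/k for 1 ≤ j ≤ k. Then for every natural number m, A_m(p,r) = (r / √(2π·k·l·(k−l))) · (p/(p−1))^r · (∏_{j=1}^{k} Γ(β_j + m/l)) / (∏_{j=1}^{k} Γ(α_j + m/l)) · c(p)^m. -/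
open Real

/-- The Raney numbers (two-parameter Fuss–Catalan numbers):
`A 0 (p,r) = 1` and `A m (p,r) = (r/m!)·∏_{i=1}^{m−1} (m·p + r − i)` for `m ≥ 1`. -/
noncomputable def raney (p r : ℝ) : ℕ → ℝ
  | 0 => 1
  | (m + 1) => (r / (Nat.factorial (m + 1) : ℝ)) *
      ∏ i ∈ Finset.Icc 1 m, (((m : ℝ) + 1) * p + r - (i : ℝ))

open Finset Set

lemma abs_one_sub_exp {θ : ℝ} (h0 : 0 ≤ θ) (h2 : θ ≤ 2 * π) :
    ‖1 - Complex.exp (θ * Complex.I)‖ = 2 * Real.sin (θ / 2) := by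
  have hre : ((1 : ℂ) - Complex.exp (θ * Complex.I)).re = 1 - Real.cos θ := by
    rw [Complex.exp_mul_I]
    simp [Complex.cos_ofReal_re, Complex.sin_ofReal_re]
  have him : ((1 : ℂ) - Complex.exp (θ * Complex.I)).im = - Real.sin θ := by
    rw [Complex.exp_mul_I]
    simp [Complex.cos_ofReal_re, Complex.sin_ofReal_re]
  rw [Complex.norm_def, Complex.normSq_apply, hre, him]
  have hs : Real.sin (θ / 2) ≥ 0 :=
    Real.sin_nonneg_of_nonneg_of_le_pi (by linarith) (by linarith)
  have h1 : Real.cos (θ / 2) ^ 2 = 1 / 2 + Real.cos θ / 2 := by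
    have := Real.cos_sq (θ / 2); rwa [mul_div_cancel₀ _ (two_ne_zero)] at this
  have h1' : Real.sin (θ / 2) ^ 2 = 1 - Real.cos (θ / 2) ^ 2 := Real.sin_sq (θ / 2)
  have h2' : Real.sin θ ^ 2 + Real.cos θ ^ 2 = 1 := Real.sin_sq_add_cos_sq θ
  have : (1 - Real.cos θ) * (1 - Real.cos θ) + -Real.sin θ * -Real.sin θ
      = (2 * Real.sin (θ / 2)) ^ 2 := by nlinarith
  rw [this, Real.sqrt_sq (by positivity)]

lemma two_sin_prod (n : ℕ) :
    ∏ j ∈ range n, (2 * Real.sin (π * (j + 1) / (n + 1))) = n + 1 := by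
  have hμ := Complex.isPrimitiveRoot_exp (n + 1) (Nat.succ_ne_zero n)
  have h := hμ.prod_one_sub_pow_eq_order
  have habs := congrArg (‖·‖) h
  rw [norm_prod] at habs
  have hc : ∀ j ∈ range n,
      ‖1 - Complex.exp (2 * π * Complex.I / (↑(n + 1) : ℂ)) ^ (j + 1)‖
        = 2 * Real.sin (π * (j + 1) / (n + 1)) := by
    intro j hj
    rw [Finset.mem_range] at hj
    have hexp : Complex.exp (2 * π * Complex.I / (↑(n + 1) : ℂ)) ^ (j + 1)
        = Complex.exp ((2 * π * (j + 1) / (n + 1) : ℝ) * Complex.I) := by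
      rw [← Complex.exp_nat_mul]
      push_cast
      ring_nf
    rw [hexp, abs_one_sub_exp]
    · congr 1
      ring
    · positivity
    · rw [div_le_iff₀ (by positivity)]
      have : (j : ℝ) + 1 ≤ n + 1 := by
        have : (j : ℝ) < n := by exact_mod_cast hj
        linarith
      nlinarith [Real.pi_pos]
  rw [prod_congr rfl hc] at habs
  rw [habs]
  rw [show ((n : ℂ) + 1) = ((n + 1 : ℕ) : ℂ) by push_cast; ring, Complex.norm_natCast]
  push_cast
  ring

lemma Gamma_prod_one (m : ℕ) :
    ∏ j ∈ range m, Real.Gamma ((j + 1) / (m + 1)) = Real.sqrt ((2 * π) ^ m / (m + 1)) := by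
  set P := ∏ j ∈ range m, Real.Gamma ((j + 1) / (m + 1)) with hP
  have hPpos : 0 < P := by
    apply Finset.prod_pos
    intro j hj
    exact Real.Gamma_pos_of_pos (by positivity)
  have hrefl : P = ∏ j ∈ range m, Real.Gamma (1 - (j + 1) / (m + 1)) := by
    rw [hP, ← Finset.prod_range_reflect]
    apply Finset.prod_congr rfl
    intro j hj
    rw [Finset.mem_range] at hj
    congr 1
    have : ((m - 1 - j : ℕ) : ℝ) = (m : ℝ) - 1 - j := by
      have h1 : j + 1 ≤ m := hj
      have h2 : m - 1 - j = m - (j+1) := by omega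
      rw [h2, Nat.cast_sub h1]
      push_cast; ring
    rw [this]
    field_simp
    ring
  have hsq : P ^ 2 = (2 * π) ^ m / (m + 1) := by
    have h2 : P ^ 2 = ∏ j ∈ range m,
        (Real.Gamma ((j + 1) / (m + 1)) * Real.Gamma (1 - (j + 1) / (m + 1))) := by
      rw [Finset.prod_mul_distrib, ← hP, ← hrefl]; ring
    rw [h2]
    have h3 : ∀ j ∈ range m,
        Real.Gamma ((j + 1) / (m + 1)) * Real.Gamma (1 - (j + 1) / (m + 1))
          = π / Real.sin (π * (j + 1) / (m + 1)) := by
      intro j hj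
      rw [Real.Gamma_mul_Gamma_one_sub]
      ring_nf
    rw [Finset.prod_congr rfl h3, Finset.prod_div_distrib, Finset.prod_const, Finset.card_range]
    have h4 : ∏ j ∈ range m, Real.sin (π * (j + 1) / (m + 1)) = (m + 1) / 2 ^ m := by
      have h5 := two_sin_prod m
      rw [Finset.prod_mul_distrib, Finset.prod_const, Finset.card_range] at h5
      have h2m : (0:ℝ) < 2 ^ m := by positivity
      field_simp at h5 ⊢
      linarith
    rw [h4]
    field_simp
    ring
  rw [← hsq, Real.sqrt_sq hPpos.le]
noncomputable def multGamma (n : ℕ) (s : ℝ) : ℝ :=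
  (n : ℝ) ^ s * (Real.sqrt ((2 * π) ^ (n - 1) * n))⁻¹ *
    ∏ j ∈ Finset.range n, Real.Gamma ((s + j) / n)

lemma multGamma_pos {n : ℕ} (hn : 1 ≤ n) {s : ℝ} (hs : 0 < s) : 0 < multGamma n s := by
  have hn0 : (0:ℝ) < n := by exact_mod_cast hn
  apply mul_pos (mul_pos (Real.rpow_pos_of_pos hn0 _) _)
  · exact Finset.prod_pos fun j hj => Real.Gamma_pos_of_pos (by positivity)
  · rw [inv_pos]
    apply Real.sqrt_pos_of_pos
    positivity

lemma multGamma_add_one {n : ℕ} (hn : 1 ≤ n) {s : ℝ} (hs : 0 < s) :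
    multGamma n (s + 1) = s * multGamma n s := by
  have hn0 : (0:ℝ) < n := by exact_mod_cast hn
  have hΓ0 : Real.Gamma (s / n) ≠ 0 := (Real.Gamma_pos_of_pos (by positivity)).ne'
  have hprod : ∏ j ∈ Finset.range n, Real.Gamma ((s + 1 + j) / n)
      = (∏ j ∈ Finset.range n, Real.Gamma ((s + j) / n)) * (s / n) := by
    have h1 : ∀ j ∈ Finset.range n,
        Real.Gamma ((s + 1 + j) / n) = Real.Gamma ((s + (j + 1 : ℕ)) / n) := by
      intro j hj; congr 1; push_cast; ring
    rw [Finset.prod_congr rfl h1]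
    have h2 := Finset.prod_range_succ' (fun j => Real.Gamma ((s + j) / n)) n
    have h3 := Finset.prod_range_succ (fun j => Real.Gamma ((s + j) / n)) n
    have h4 : Real.Gamma ((s + n) / n) = (s / n) * Real.Gamma (s / n) := by
      have : (s + n) / n = s / n + 1 := by field_simp
      rw [this, Real.Gamma_add_one (by positivity)]
    have h5 : (∏ j ∈ Finset.range n, Real.Gamma ((s + (j + 1 : ℕ)) / n)) * Real.Gamma ((s + (0:ℕ)) / n)
        = (∏ j ∈ Finset.range n, Real.Gamma ((s + j) / n)) * Real.Gamma ((s + n) / n) := by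
      rw [← h2, ← h3]
    apply mul_right_cancel₀ hΓ0
    have h0 : Real.Gamma (s / (n:ℝ)) = Real.Gamma ((s + ((0:ℕ):ℝ)) / n) := by norm_num
    calc (∏ j ∈ Finset.range n, Real.Gamma ((s + ((j + 1 : ℕ):ℝ)) / n)) * Real.Gamma (s / n)
        = ∏ j ∈ Finset.range (n+1), Real.Gamma ((s + j) / n) := by rw [h2, h0]
      _ = (∏ j ∈ Finset.range n, Real.Gamma ((s + j) / n)) * Real.Gamma ((s + n) / n) := h3
      _ = (∏ j ∈ Finset.range n, Real.Gamma ((s + j) / n)) * (s / n) * Real.Gamma (s / n) := by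
          rw [h4]; ring
  rw [multGamma, multGamma, hprod, Real.rpow_add hn0, Real.rpow_one]
  field_simp

lemma multGamma_one {n : ℕ} (hn : 1 ≤ n) : multGamma n 1 = 1 := by
  obtain ⟨m, rfl⟩ := Nat.exists_eq_add_of_le hn
  have hm : (1 + m) - 1 = m := by omega
  have hprod : ∏ j ∈ Finset.range (1 + m), Real.Gamma ((1 + j) / (1 + m : ℕ))
      = Real.sqrt ((2 * π) ^ m / (m + 1)) := by
    rw [add_comm 1 m, Finset.prod_range_succ]
    have hlast : ((1 : ℝ) + (m:ℕ)) / ((m + 1 : ℕ) : ℝ) = 1 := by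
      push_cast; rw [div_eq_one_iff_eq] <;> [ring; positivity]
    rw [hlast, Real.Gamma_one, mul_one, ← Gamma_prod_one m]
    apply Finset.prod_congr rfl
    intro j hj
    congr 1
    push_cast
    ring
  rw [multGamma, hm, Real.rpow_one]
  have h1 : ∏ j ∈ Finset.range (1 + m), Real.Gamma ((1 + (j:ℝ)) / ((1 + m : ℕ) : ℝ))
      = Real.sqrt ((2 * π) ^ m / (m + 1)) := hprod
  rw [h1]
  have h2 : Real.sqrt ((2 * π) ^ m / ((m:ℝ) + 1)) * ((1 + m : ℕ) : ℝ)
      = Real.sqrt ((2 * π) ^ m * ((1 + m : ℕ) : ℝ)) := by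
    rw [← Real.sqrt_sq (by positivity : (0:ℝ) ≤ ((1 + m : ℕ) : ℝ)), ← Real.sqrt_mul (by positivity)]
    congr 1
    have : ((1 + m : ℕ) : ℝ) = (m:ℝ) + 1 := by push_cast; ring
    rw [this]
    rw [Real.sqrt_sq (by positivity)]
    field_simp
  have h3 : (0:ℝ) < Real.sqrt ((2 * π) ^ m * ((1 + m : ℕ) : ℝ)) := by
    apply Real.sqrt_pos_of_pos; positivity
  rw [mul_comm, ← mul_assoc, h2, mul_inv_cancel₀ h3.ne']
lemma convexOn_sum_Ioi {ι : Type*} (t : Finset ι) (f : ι → ℝ → ℝ)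
    (h : ∀ i ∈ t, ConvexOn ℝ (Set.Ioi (0:ℝ)) (f i)) :
    ConvexOn ℝ (Set.Ioi (0:ℝ)) (fun x => ∑ i ∈ t, f i x) := by
  classical
  induction t using Finset.induction with
  | empty => simpa using convexOn_const (0:ℝ) (convex_Ioi 0)
  | @insert a t ha ih =>
    simp only [Finset.sum_insert ha]
    exact (h a (Finset.mem_insert_self a t)).add
      (ih fun i hi => h i (Finset.mem_insert_of_mem hi))

lemma convexOn_log_Gamma_affine (a b : ℝ) (ha : 0 < a) (hb : 0 ≤ b) :
    ConvexOn ℝ (Set.Ioi (0:ℝ)) (fun x => Real.log (Real.Gamma (a * x + b))) := by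
  set A : ℝ →ᵃ[ℝ] ℝ := (DistribMulAction.toLinearMap ℝ ℝ a).toAffineMap + AffineMap.const ℝ ℝ b
    with hA
  have hAx : ∀ x : ℝ, A x = a * x + b := by
    intro x
    change a • x + b = a * x + b
    rw [smul_eq_mul]
  have hmap := Real.convexOn_log_Gamma.comp_affineMap A
  have hsub : Set.Ioi (0:ℝ) ⊆ ⇑A ⁻¹' Set.Ioi 0 := by
    intro x hx
    have hx0 : (0:ℝ) < x := hx
    simp only [Set.mem_preimage, hAx, Set.mem_Ioi]
    positivity
  have := hmap.subset hsub (convex_Ioi 0)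
  refine this.congr ?_
  intro x hx
  simp only [Function.comp_apply, hAx]

lemma multGamma_log_convex {n : ℕ} (hn : 1 ≤ n) :
    ConvexOn ℝ (Set.Ioi (0:ℝ)) (Real.log ∘ multGamma n) := by
  have hn0 : (0:ℝ) < n := by exact_mod_cast hn
  have heq : Set.EqOn (Real.log ∘ multGamma n)
      (fun s => (∑ j ∈ Finset.range n, Real.log (Real.Gamma ((1 / (n:ℝ)) * s + (j:ℝ) / n)))
        + (s * Real.log n + (- Real.log (Real.sqrt ((2 * π) ^ (n - 1) * n)))))
      (Set.Ioi 0) := by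
    intro s hs
    have hs0 : (0:ℝ) < s := hs
    have hK : (0:ℝ) < Real.sqrt ((2 * π) ^ (n - 1) * n) := by
      apply Real.sqrt_pos_of_pos; positivity
    have hprod : (0:ℝ) < ∏ j ∈ Finset.range n, Real.Gamma ((s + j) / n) :=
      Finset.prod_pos fun j hj => Real.Gamma_pos_of_pos (by positivity)
    simp only [Function.comp_apply, multGamma]
    rw [Real.log_mul (by positivity) hprod.ne', Real.log_mul (by positivity) (by positivity),
      Real.log_rpow hn0, Real.log_inv,
      Real.log_prod (fun j hj => (Real.Gamma_pos_of_pos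
        (div_pos (add_pos_of_pos_of_nonneg hs0 (Nat.cast_nonneg j)) hn0)).ne')]
    have : ∀ j ∈ Finset.range n,
        Real.log (Real.Gamma ((s + j) / n)) = Real.log (Real.Gamma ((1 / (n:ℝ)) * s + (j:ℝ) / n)) := by
      intro j hj; congr 2; field_simp
    rw [Finset.sum_congr rfl this]
    ring
  refine ConvexOn.congr ?_ heq.symm
  refine ConvexOn.add ?_ ?_
  · apply convexOn_sum_Ioi
    intro j hj
    exact convexOn_log_Gamma_affine (1 / (n:ℝ)) ((j:ℝ) / n) (by positivity) (by positivity)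
  · refine ConvexOn.add_const ?_ _
    refine ConvexOn.congr ((convexOn_id (convex_Ioi (0:ℝ))).smul (Real.log_nonneg (x := (n:ℝ)) (by exact_mod_cast hn))) ?_
    intro x _
    simp [smul_eq_mul, mul_comm]
lemma Gauss_mult {n : ℕ} (hn : 1 ≤ n) {s : ℝ} (hs : 0 < s) :
    ∏ j ∈ Finset.range n, Real.Gamma ((s + j) / n)
      = Real.sqrt ((2 * π) ^ (n - 1) * n) * (n : ℝ) ^ (-s) * Real.Gamma s := by
  have hn0 : (0:ℝ) < n := by exact_mod_cast hn
  have heq : multGamma n s = Real.Gamma s :=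
    Real.eq_Gamma_of_log_convex (multGamma_log_convex hn)
      (fun {y} hy => multGamma_add_one hn hy)
      (fun {y} hy => multGamma_pos hn hy)
      (multGamma_one hn) hs
  have hK : (0:ℝ) < Real.sqrt ((2 * π) ^ (n - 1) * n) := by
    apply Real.sqrt_pos_of_pos; positivity
  have hpow : (0:ℝ) < (n:ℝ) ^ s := Real.rpow_pos_of_pos hn0 s
  rw [multGamma] at heq
  rw [Real.rpow_neg hn0.le]
  field_simp at heq ⊢
  linarith [heq]

lemma Gamma_seq_prod (x : ℝ) (hx : 0 < x) (N : ℕ) :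
    Real.Gamma (x + N) = (∏ j ∈ Finset.range N, (x + j)) * Real.Gamma x := by
  induction N with
  | zero => simp
  | succ n ih =>
    have h1 : x + ((n + 1 : ℕ) : ℝ) = (x + n) + 1 := by push_cast; ring
    have h2 : x + (n:ℝ) ≠ 0 := (add_pos_of_pos_of_nonneg hx (Nat.cast_nonneg n)).ne'
    rw [h1, Real.Gamma_add_one h2, ih, Finset.prod_range_succ]
    ring

lemma raney_eq_Gamma {p r : ℝ} (hp : 1 ≤ p) (hr : 0 < r) (m : ℕ) :
    raney p r m = r * Real.Gamma (m * p + r)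
      / ((m.factorial : ℝ) * Real.Gamma ((m:ℝ) * p + r - m + 1)) := by
  cases m with
  | zero =>
    simp only [raney, Nat.cast_zero, zero_mul, zero_add, Nat.factorial_zero, Nat.cast_one,
      one_mul, sub_zero]
    rw [Real.Gamma_add_one hr.ne']
    have : Real.Gamma r ≠ 0 := (Real.Gamma_pos_of_pos hr).ne'
    field_simp
  | succ m =>
    have hM : (0:ℝ) < ((m:ℝ) + 1) * p + r - m := by nlinarith
    set x : ℝ := ((m:ℝ) + 1) * p + r - m with hxdef
    have hΓx : Real.Gamma x ≠ 0 := (Real.Gamma_pos_of_pos hM).ne'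
    have hprod : ∏ i ∈ Finset.Icc 1 m, (((m:ℝ) + 1) * p + r - i)
        = ∏ j ∈ Finset.range m, (x + j) := by
      have e1 : Finset.Icc 1 m = Finset.Ico 1 (m + 1) := rfl
      rw [e1, Finset.prod_Ico_eq_prod_range]
      have e2 : m + 1 - 1 = m := by omega
      rw [e2, ← Finset.prod_range_reflect (fun j => x + j) m]
      apply Finset.prod_congr rfl
      intro j hj
      rw [Finset.mem_range] at hj
      have : ((m - 1 - j : ℕ) : ℝ) = (m:ℝ) - 1 - j := by
        have h2 : m - 1 - j = m - (j + 1) := by omega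
        rw [h2, Nat.cast_sub (by omega)]
        push_cast; ring
      simp only [this, hxdef]
      push_cast
      ring
    have hGam1 : Real.Gamma (((m + 1 : ℕ):ℝ) * p + r)
        = (∏ j ∈ Finset.range m, (x + j)) * Real.Gamma x := by
      have : ((m + 1 : ℕ):ℝ) * p + r = x + (m:ℕ) := by push_cast [hxdef]; ring
      rw [this, Gamma_seq_prod x hM m]
    have hGam2 : ((m + 1 : ℕ):ℝ) * p + r - ((m + 1 : ℕ):ℝ) + 1 = x := by
      push_cast [hxdef]; ring
    rw [raney, hprod, hGam1, hGam2]
    have hfac : ((m + 1).factorial : ℝ) ≠ 0 := by positivity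
    field_simp
/-- For integers `1 ≤ l < k`, `p = k/l`, and real `0 < r ≤ p`,
`A_m(p,r) = (r / √(2π·k·l·(k−l))) · (p/(p−1))^r ·
  (∏_{j=1}^k Γ(β_j + m/l)) / (∏_{j=1}^k Γ(α_j + m/l)) · c(p)^m`,
where `α_j = j/l` for `1 ≤ j ≤ l`, `α_j = (r + j − l)/(k − l)` for `l+1 ≤ j ≤ k`,
`β_j = (r + j − 1)/k`, and `c(p) = p^p·(p−1)^(1−p)`. -/
theorem stmt_2 (k l : ℕ) (hl : 1 ≤ l) (hlk : l < k) (r : ℝ) (hr : 0 < r)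
    (hrp : r ≤ (k : ℝ) / (l : ℝ)) (m : ℕ) :
    raney ((k : ℝ) / (l : ℝ)) r m =
      r / Real.sqrt (2 * π * (k : ℝ) * (l : ℝ) * ((k : ℝ) - (l : ℝ))) *
        (((k : ℝ) / (l : ℝ)) / ((k : ℝ) / (l : ℝ) - 1)) ^ r *
        ((∏ j ∈ Finset.Icc 1 k, Gamma ((r + (j : ℝ) - 1) / (k : ℝ) + (m : ℝ) / (l : ℝ))) /
          (∏ j ∈ Finset.Icc 1 k, Gamma ((if j ≤ l then (j : ℝ) / (l : ℝ)
            else (r + (j : ℝ) - (l : ℝ)) / ((k : ℝ) - (l : ℝ))) + (m : ℝ) / (l : ℝ)))) *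
        (((k : ℝ) / (l : ℝ)) ^ ((k : ℝ) / (l : ℝ)) *
          ((k : ℝ) / (l : ℝ) - 1) ^ (1 - (k : ℝ) / (l : ℝ))) ^ m := by
  have hl0 : (0:ℝ) < l := by exact_mod_cast hl
  have hk1 : 1 ≤ k := hl.trans hlk.le
  have hk0 : (0:ℝ) < k := by exact_mod_cast hk1
  have hlkR : (l:ℝ) < k := by exact_mod_cast hlk
  have hkl : (0:ℝ) < (k:ℝ) - l := by linarith
  have hklc : ((k - l : ℕ) : ℝ) = (k:ℝ) - l := by
    rw [Nat.cast_sub hlk.le]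
  have hkl1 : 1 ≤ k - l := by omega
  set s₁ : ℝ := r + m * ((k:ℝ)/l) with hs₁def
  set s₂ : ℝ := (m:ℝ) + 1 with hs₂def
  set s₃ : ℝ := r + 1 + m * (((k:ℝ) - l)/l) with hs₃def
  have hs₁ : 0 < s₁ := by
    have : 0 ≤ (m:ℝ) * ((k:ℝ)/l) := by positivity
    rw [hs₁def]; linarith
  have hs₂ : 0 < s₂ := by rw [hs₂def]; positivity
  have hs₃ : 0 < s₃ := by
    have : 0 ≤ (m:ℝ) * (((k:ℝ)-l)/l) := by positivity
    rw [hs₃def]; linarith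
  -- β product
  have hβ : ∏ j ∈ Finset.Icc 1 k, Real.Gamma ((r + (j : ℝ) - 1) / (k : ℝ) + (m : ℝ) / (l : ℝ))
      = Real.sqrt ((2 * π) ^ (k - 1) * k) * (k:ℝ) ^ (-s₁) * Real.Gamma s₁ := by
    rw [← Gauss_mult hk1 hs₁]
    rw [show Finset.Icc 1 k = Finset.Ico 1 (k+1) from rfl, Finset.prod_Ico_eq_prod_range]
    simp only [Nat.add_sub_cancel]
    apply Finset.prod_congr rfl
    intro i hi
    congr 1
    rw [hs₁def]
    push_cast
    field_simp
    ring
  -- α product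
  have hα : ∏ j ∈ Finset.Icc 1 k, Real.Gamma ((if j ≤ l then (j : ℝ) / (l : ℝ)
        else (r + (j : ℝ) - (l : ℝ)) / ((k : ℝ) - (l : ℝ))) + (m : ℝ) / (l : ℝ))
      = (Real.sqrt ((2 * π) ^ (l - 1) * l) * (l:ℝ) ^ (-s₂) * (m.factorial : ℝ)) *
        (Real.sqrt ((2 * π) ^ (k - l - 1) * ((k:ℝ) - l)) * ((k:ℝ) - l) ^ (-s₃) * Real.Gamma s₃) := by
    have hsplit : Finset.Icc 1 k = Finset.Ioc 0 l ∪ Finset.Ioc l k := by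
      rw [Finset.Ioc_union_Ioc_eq_Ioc (Nat.zero_le l) hlk.le, ← Finset.Icc_add_one_left_eq_Ioc, zero_add]
    have hdisj : Disjoint (Finset.Ioc 0 l) (Finset.Ioc l k) := by
      rw [Finset.disjoint_left]
      intro a ha hb
      rw [Finset.mem_Ioc] at ha hb
      omega
    rw [hsplit, Finset.prod_union hdisj]
    congr 1
    · -- first part
      have h1 : ∀ j ∈ Finset.Ioc 0 l, Real.Gamma ((if j ≤ l then (j : ℝ) / (l : ℝ)
            else (r + (j : ℝ) - (l : ℝ)) / ((k : ℝ) - (l : ℝ))) + (m : ℝ) / (l : ℝ))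
          = Real.Gamma ((j : ℝ) / (l : ℝ) + (m : ℝ) / (l : ℝ)) := by
        intro j hj
        rw [Finset.mem_Ioc] at hj
        rw [if_pos hj.2]
      rw [Finset.prod_congr rfl h1]
      have h2 : ∏ j ∈ Finset.Ioc 0 l, Real.Gamma ((j : ℝ) / (l : ℝ) + (m : ℝ) / (l : ℝ))
          = ∏ i ∈ Finset.range l, Real.Gamma ((s₂ + i) / l) := by
        rw [← Finset.Icc_add_one_left_eq_Ioc, zero_add, show Finset.Icc 1 l = Finset.Ico 1 (l+1) from rfl,
          Finset.prod_Ico_eq_prod_range]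
        simp only [Nat.add_sub_cancel]
        apply Finset.prod_congr rfl
        intro i hi
        congr 1
        rw [hs₂def]
        push_cast
        field_simp
        ring
      rw [h2, Gauss_mult hl hs₂, hs₂def, Real.Gamma_nat_eq_factorial]
    · -- second part
      have h2 : ∏ j ∈ Finset.Ioc l k, Real.Gamma ((if j ≤ l then (j : ℝ) / (l : ℝ)
            else (r + (j : ℝ) - (l : ℝ)) / ((k : ℝ) - (l : ℝ))) + (m : ℝ) / (l : ℝ))
          = ∏ i ∈ Finset.range (k - l), Real.Gamma ((s₃ + i) / ((k - l : ℕ) : ℝ)) := by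
        rw [← Finset.Icc_add_one_left_eq_Ioc, show Finset.Icc (l+1) k = Finset.Ico (l+1) (k+1) from rfl,
          Finset.prod_Ico_eq_prod_range]
        have : k + 1 - (l + 1) = k - l := by omega
        rw [this]
        apply Finset.prod_congr rfl
        intro i hi
        rw [Finset.mem_range] at hi
        rw [if_neg (by omega)]
        congr 1
        rw [hs₃def, hklc]
        push_cast
        field_simp
        ring
      rw [h2, Gauss_mult hkl1 hs₃, hklc]
  rw [hβ, hα]
  have hp1 : 1 ≤ (k:ℝ)/l := by
    rw [le_div_iff₀ hl0]; linarith
  rw [raney_eq_Gamma hp1 hr m]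
  rw [show (m:ℝ) * ((k:ℝ)/l) + r = s₁ by rw [hs₁def]; ring]
  rw [show s₁ - (m:ℝ) + 1 = s₃ by rw [hs₁def, hs₃def]; field_simp; ring]
  -- now pure scalar identity
  -- endgame
  clear hβ hα hrp
  have hd : (k:ℝ)/l - 1 = ((k:ℝ)-l)/l := by field_simp
  have hQ : (k:ℝ)/l / ((k:ℝ)/l - 1) = (k:ℝ)/((k:ℝ)-l) := by
    rw [hd]
    rw [div_div_div_eq]
    rw [div_eq_div_iff (by positivity) (by positivity)]
    ring
  have hsqrt : Real.sqrt (2 * π * k * l * ((k:ℝ) - l))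
        * (Real.sqrt ((2*π)^(l-1) * l) * Real.sqrt ((2*π)^(k-l-1) * ((k:ℝ)-l)))
      = Real.sqrt ((2*π)^(k-1) * k) * ((l:ℝ) * ((k:ℝ)-l)) := by
    rw [← Real.sqrt_mul (by positivity), ← Real.sqrt_mul (by positivity : (0:ℝ) ≤ 2 * π * k * l * ((k:ℝ) - l))]
    have e : 2*π*(k:ℝ)*l*((k:ℝ)-l) * ((2*π)^(l-1)*l * ((2*π)^(k-l-1)*((k:ℝ)-l)))
        = (2*π)^(k-1)*k * ((l:ℝ)*((k:ℝ)-l))^2 := by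
      have hexp : k - 1 = 1 + (l-1) + (k-l-1) := by omega
      rw [hexp, pow_add, pow_add, pow_one]
      ring
    rw [e, Real.sqrt_mul (by positivity), Real.sqrt_sq (by positivity)]
  have hb1 : (0:ℝ) < (k:ℝ)/((k:ℝ)-l) := by positivity
  have hb2 : (0:ℝ) < (k:ℝ)/l := by positivity
  have hb3 : (0:ℝ) < ((k:ℝ)-l)/l := by positivity
  have hc : (0:ℝ) < ((k:ℝ)/l) ^ ((k:ℝ)/l) * (((k:ℝ)-l)/l) ^ (1 - (k:ℝ)/l) :=
    mul_pos (Real.rpow_pos_of_pos hb2 _) (Real.rpow_pos_of_pos hb3 _)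
  have hkey : ((k:ℝ)/((k:ℝ)-l)) ^ r
        * (((k:ℝ)/l) ^ ((k:ℝ)/l) * (((k:ℝ)-l)/l) ^ (1 - (k:ℝ)/l)) ^ m
        * (k:ℝ) ^ (-s₁)
      = ((l:ℝ) * ((k:ℝ)-l)) * ((l:ℝ) ^ (-s₂) * ((k:ℝ)-l) ^ (-s₃)) := by
    have hL : (0:ℝ) < ((k:ℝ)/((k:ℝ)-l)) ^ r
        * (((k:ℝ)/l) ^ ((k:ℝ)/l) * (((k:ℝ)-l)/l) ^ (1 - (k:ℝ)/l)) ^ m * (k:ℝ) ^ (-s₁) :=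
      mul_pos (mul_pos (Real.rpow_pos_of_pos hb1 _) (pow_pos hc _)) (Real.rpow_pos_of_pos hk0 _)
    have hR : (0:ℝ) < ((l:ℝ) * ((k:ℝ)-l)) * ((l:ℝ) ^ (-s₂) * ((k:ℝ)-l) ^ (-s₃)) :=
      mul_pos (mul_pos hl0 hkl) (mul_pos (Real.rpow_pos_of_pos hl0 _) (Real.rpow_pos_of_pos hkl _))
    apply Real.log_injOn_pos (Set.mem_Ioi.2 hL) (Set.mem_Ioi.2 hR)
    have Lc : Real.log (((k:ℝ)/l) ^ ((k:ℝ)/l) * (((k:ℝ)-l)/l) ^ (1 - (k:ℝ)/l))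
        = (k/l)*(Real.log k - Real.log l) + (1-(k:ℝ)/l)*(Real.log ((k:ℝ)-l) - Real.log l) := by
      rw [Real.log_mul (Real.rpow_pos_of_pos hb2 _).ne' (Real.rpow_pos_of_pos hb3 _).ne',
        Real.log_rpow hb2, Real.log_rpow hb3,
        Real.log_div hk0.ne' hl0.ne', Real.log_div hkl.ne' hl0.ne']
    have LQ : Real.log ((k:ℝ)/((k:ℝ)-l)) = Real.log k - Real.log ((k:ℝ)-l) :=
      Real.log_div hk0.ne' hkl.ne'
    rw [Real.log_mul (mul_pos (Real.rpow_pos_of_pos hb1 _) (pow_pos hc _)).ne'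
        (Real.rpow_pos_of_pos hk0 _).ne',
      Real.log_mul (Real.rpow_pos_of_pos hb1 _).ne' (pow_pos hc _).ne',
      Real.log_rpow hb1, Real.log_pow, Real.log_rpow hk0,
      Real.log_mul (mul_pos hl0 hkl).ne' (mul_pos (Real.rpow_pos_of_pos hl0 _)
        (Real.rpow_pos_of_pos hkl _)).ne',
      Real.log_mul hl0.ne' hkl.ne',
      Real.log_mul (Real.rpow_pos_of_pos hl0 _).ne' (Real.rpow_pos_of_pos hkl _).ne',
      Real.log_rpow hl0, Real.log_rpow hkl, Lc, LQ, hs₁def, hs₂def, hs₃def]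
    field_simp
    ring
  -- combine
  rw [hQ, hd]
  have hKk : (0:ℝ) < Real.sqrt ((2*π)^(k-1) * k) := Real.sqrt_pos_of_pos (by positivity)
  have hKl : (0:ℝ) < Real.sqrt ((2*π)^(l-1) * l) := Real.sqrt_pos_of_pos (by positivity)
  have hKkl : (0:ℝ) < Real.sqrt ((2*π)^(k-l-1) * ((k:ℝ)-l)) := Real.sqrt_pos_of_pos (by positivity)
  have hS : (0:ℝ) < Real.sqrt (2 * π * k * l * ((k:ℝ) - l)) :=
    Real.sqrt_pos_of_pos (by positivity)
  have hΓ1 : (0:ℝ) < Real.Gamma s₁ := Real.Gamma_pos_of_pos hs₁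
  have hΓ3 : (0:ℝ) < Real.Gamma s₃ := Real.Gamma_pos_of_pos hs₃
  have hF : (0:ℝ) < (m.factorial : ℝ) := by positivity
  have hpk : (0:ℝ) < (k:ℝ) ^ (-s₁) := Real.rpow_pos_of_pos hk0 _
  have hpl : (0:ℝ) < (l:ℝ) ^ (-s₂) := Real.rpow_pos_of_pos hl0 _
  have hpkl : (0:ℝ) < ((k:ℝ)-l) ^ (-s₃) := Real.rpow_pos_of_pos hkl _
  have hX1 : (0:ℝ) < ((k:ℝ)/((k:ℝ)-l)) ^ r := Real.rpow_pos_of_pos hb1 _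
  have hX2 : (0:ℝ) < (((k:ℝ)/l) ^ ((k:ℝ)/l) * (((k:ℝ)-l)/l) ^ (1 - (k:ℝ)/l)) ^ m := pow_pos hc _
  generalize hgX1 : ((k:ℝ)/((k:ℝ)-l)) ^ (r:ℝ) = X1 at hX1 hkey ⊢
  generalize hgX2 : (((k:ℝ)/l) ^ ((k:ℝ)/l) * (((k:ℝ)-l)/l) ^ (1 - (k:ℝ)/l)) ^ m = X2 at hX2 hkey ⊢
  generalize hgX3 : (k:ℝ) ^ (-s₁) = X3 at hpk hkey ⊢
  generalize hgL : (l:ℝ) ^ (-s₂) = L2 at hpl hkey ⊢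
  generalize hgKL : ((k:ℝ)-l) ^ (-s₃) = L3 at hpkl hkey ⊢
  generalize hgS : Real.sqrt (2 * π * (k:ℝ) * l * ((k:ℝ) - l)) = S at hS hsqrt ⊢
  generalize hgKk : Real.sqrt ((2*π)^(k-1) * (k:ℝ)) = Kk at hKk hsqrt ⊢
  generalize hgKl : Real.sqrt ((2*π)^(l-1) * (l:ℝ)) = Kl at hKl hsqrt ⊢
  generalize hgKkl : Real.sqrt ((2*π)^(k-l-1) * ((k:ℝ)-l)) = Kkl at hKkl hsqrt ⊢
  generalize hgG1 : Real.Gamma s₁ = G1 at hΓ1 ⊢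
  generalize hgG3 : Real.Gamma s₃ = G3 at hΓ3 ⊢
  have hW : (0:ℝ) < (k:ℝ) - l := hkl
  generalize hgW : (k:ℝ) - (l:ℝ) = W at hW hkey hsqrt ⊢
  field_simp
  linear_combination (L2 * L3) * hsqrt
    - Kk * hkey
end

section
/- Let k, l be integers with 1 ≤ l < k and let r be real with 0 < r ≤ k/l. Define α_j = j/l for 1 ≤ j ≤ l and α_j = (r + j − l)/(k − l) for l + 1 ≤ j ≤ k, and β_j = (r + j − 1)/k for 1 ≤ j ≤ k. For 1 ≤ i ≤ l + 1 set j_i = ⌊(i−1)k/l⌋ + 1, and define α̃_j = i/l if j = j_i for some 1 ≤ i ≤ l, and α̃_j = (r + j − i)/(k − l) if j_i < j < j_{i+1}. Then the finite sequence (α̃_j)_{j=1}^{k} is a rearrangement of (α_j)_{j=1}^{k} (they are equal as multisets), and β_j ≤ α̃_j for all 1 ≤ j ≤ k. -/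
open Real

/-- `j_i = ⌊(i−1)·k/l⌋ + 1`. -/
noncomputable def jfun (k l : ℕ) (i : ℕ) : ℕ := ⌊(((i : ℝ) - 1) * (k : ℝ)) / (l : ℝ)⌋₊ + 1

lemma jfun_eq (k l i : ℕ) (hi : 1 ≤ i) : jfun k l i = (i - 1) * k / l + 1 := by
  unfold jfun
  congr 1
  have h1 : ((i : ℝ) - 1) * (k : ℝ) = (((i - 1) * k : ℕ) : ℝ) := by
    push_cast [Nat.cast_sub hi]
    ring
  rw [h1, Nat.floor_div_natCast, Nat.floor_natCast]

/-- Let `1 ≤ l < k` be integers and `0 < r ≤ k/l` a real number.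
With `α_j = j/l` for `1 ≤ j ≤ l`, `α_j = (r + j − l)/(k − l)` for `l+1 ≤ j ≤ k`,
`β_j = (r + j − 1)/k`, `j_i = ⌊(i−1)k/l⌋ + 1`, and `α̃` any function satisfying
`α̃_{j_i} = i/l` for `1 ≤ i ≤ l` and `α̃_j = (r + j − i)/(k − l)` whenever `j_i < j < j_{i+1}`
(`1 ≤ i ≤ l`): the finite sequence `(α̃_j)_{j=1}^k` is a rearrangement of `(α_j)_{j=1}^k`
(equal as multisets), and `β_j ≤ α̃_j` for all `1 ≤ j ≤ k`. -/
theorem stmt_3 (k l : ℕ) (hl : 1 ≤ l) (hlk : l < k) (r : ℝ) (hr : 0 < r)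
    (hrp : r ≤ (k : ℝ) / (l : ℝ)) (at' : ℕ → ℝ)
    (hat1 : ∀ i : ℕ, 1 ≤ i → i ≤ l → at' (jfun k l i) = (i : ℝ) / (l : ℝ))
    (hat2 : ∀ i j : ℕ, 1 ≤ i → i ≤ l → jfun k l i < j → j < jfun k l (i + 1) →
      at' j = (r + (j : ℝ) - (i : ℝ)) / ((k : ℝ) - (l : ℝ))) :
    ((Finset.Icc 1 k).val.map at' =
      (Finset.Icc 1 k).val.map (fun j : ℕ => if j ≤ l then (j : ℝ) / (l : ℝ)
        else (r + (j : ℝ) - (l : ℝ)) / ((k : ℝ) - (l : ℝ)))) ∧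
    ∀ j : ℕ, 1 ≤ j → j ≤ k → (r + (j : ℝ) - 1) / (k : ℝ) ≤ at' j := by
  classical
  have hk0 : 0 < k := by omega
  have hl0 : 0 < l := hl
  set α := fun j : ℕ => if j ≤ l then (j : ℝ) / (l : ℝ)
        else (r + (j : ℝ) - (l : ℝ)) / ((k : ℝ) - (l : ℝ)) with hα
  set I := fun j : ℕ => (j * l - 1) / k + 1 with hI
  -- basic facts about I
  have hC : ∀ j, 1 ≤ j → (I j - 1) * k < j * l ∧ j * l ≤ I j * k := by
    intro j hj
    have h1 : 0 < j * l := Nat.mul_pos hj hl0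
    simp only [hI, Nat.add_sub_cancel]
    constructor
    · exact lt_of_le_of_lt (Nat.div_mul_le_self _ _) (Nat.sub_lt h1 one_pos)
    · have h2 : j * l - 1 < ((j * l - 1) / k + 1) * k :=
        (Nat.div_lt_iff_lt_mul hk0).mp (Nat.lt_succ_self _)
      omega
  have hB1 : ∀ i j, 1 ≤ i → (jfun k l i ≤ j ↔ (i - 1) * k < j * l) := by
    intro i j hi
    rw [jfun_eq k l i hi]
    constructor
    · intro h
      have h2 : (i - 1) * k / l < j := by omega
      exact (Nat.div_lt_iff_lt_mul hl0).mp h2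
    · intro h
      have := (Nat.div_lt_iff_lt_mul hl0).mpr h
      omega
  have hB2 : ∀ i j : ℕ, j < jfun k l (i + 1) ↔ j * l ≤ i * k := by
    intro i j
    rw [jfun_eq k l (i + 1) (by omega)]
    have e : i + 1 - 1 = i := rfl
    rw [e]
    constructor
    · intro h
      have h2 : j ≤ i * k / l := by omega
      exact (Nat.le_div_iff_mul_le hl0).mp h2
    · intro h
      have := (Nat.le_div_iff_mul_le hl0).mpr h
      omega
  have hD : ∀ j, 1 ≤ j → j ≤ k → 1 ≤ I j ∧ I j ≤ l := by
    intro j hj hjk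
    refine ⟨by simp [hI], ?_⟩
    have h1 := (hC j hj).1
    have h2 : j * l ≤ k * l := Nat.mul_le_mul_right _ hjk
    have h3 : (I j - 1) * k < l * k := by
      have e : k * l = l * k := Nat.mul_comm _ _
      omega
    have := Nat.lt_of_mul_lt_mul_right h3
    omega
  have hE : ∀ j, 1 ≤ j → jfun k l (I j) ≤ j ∧ j < jfun k l (I j + 1) := by
    intro j hj
    have hC' := hC j hj
    have hI1 : 1 ≤ I j := by simp [hI]
    exact ⟨(hB1 (I j) j hI1).mpr hC'.1, (hB2 (I j) j).mpr hC'.2⟩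
  have hJge : ∀ i, 1 ≤ i → i ≤ jfun k l i := by
    intro i hi
    rw [jfun_eq k l i hi]
    have h : (i - 1) ≤ (i - 1) * k / l := by
      rw [Nat.le_div_iff_mul_le hl0]
      exact Nat.mul_le_mul_left _ (le_of_lt hlk)
    omega
  have hG : ∀ j, 1 ≤ j → I (j + 1) ≤ I j + 1 := by
    intro j hj
    simp only [hI]
    have h1 : 1 ≤ j * l := Nat.mul_pos hj hl0
    have e0 : (j + 1) * l = j * l + l := by ring
    have e : (j + 1) * l - 1 = (j * l - 1) + l := by omega
    rw [e]
    have h2 : (j * l - 1 + l) / k ≤ (j * l - 1 + k) / k :=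
      Nat.div_le_div_right (by omega)
    rw [Nat.add_div_right _ hk0] at h2
    omega
  have hK : ∀ d j, 1 ≤ j → I (j + d) ≤ I j + d := by
    intro d
    induction d with
    | zero => intro j hj; simp
    | succ n ih =>
      intro j hj
      have h1 := ih j hj
      have h2 := hG (j + n) (by omega)
      have e : j + (n + 1) = (j + n) + 1 := by omega
      rw [e]
      omega
  have hH : ∀ j, 1 ≤ j → I (j + 1) = I j + 1 → jfun k l (I (j + 1)) = j + 1 := by
    intro j hj he
    have h1 := (hE (j + 1) (by omega)).1
    have h2 := (hE j hj).2
    rw [← he] at h2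
    omega
  set σ := fun j : ℕ => if jfun k l (I j) = j then I j else l + (j - I j) with hσ
  clear_value α I σ
  have hmark_lt : ∀ j, 1 ≤ j → jfun k l (I j) ≠ j → I j < j := by
    intro j hj hm
    have h1 := (hE j hj).1
    have h2 := hJge (I j) (by simp [hI])
    omega
  have hrange : ∀ j, 1 ≤ j → j ≤ k → 1 ≤ σ j ∧ σ j ≤ k := by
    intro j hj hjk
    have hD' := hD j hj hjk
    by_cases hm : jfun k l (I j) = j
    · simp only [hσ, if_pos hm]
      omega
    · simp only [hσ, if_neg hm]
      have hlt : I j < j := hmark_lt j hj hm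
      have h4 : j * l ≤ I j * k := (hC j hj).2
      have h5 : I j * (k - l) ≤ l * (k - l) := Nat.mul_le_mul_right _ hD'.2
      have e2 : I j * (k - l) + I j * l = I j * k := by
        rw [← Nat.mul_add]
        congr 1
        omega
      have e1 : (j - I j) * l + I j * l = j * l := by
        rw [← Nat.add_mul]
        congr 1
        omega
      have e3 : l * (k - l) = (k - l) * l := Nat.mul_comm _ _
      have key : (j - I j) * l ≤ (k - l) * l := by omega
      have := Nat.le_of_mul_le_mul_right (by omega : (j - I j) * l ≤ (k - l) * l) hl0
      omega
  have hval : ∀ j, 1 ≤ j → j ≤ k → at' j = α (σ j) := by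
    intro j hj hjk
    have hD' := hD j hj hjk
    by_cases hm : jfun k l (I j) = j
    · simp only [hσ, if_pos hm]
      have h := hat1 (I j) hD'.1 hD'.2
      rw [hm] at h
      rw [h]
      simp only [hα]
      rw [if_pos hD'.2]
    · simp only [hσ, if_neg hm]
      have hlt : I j < j := hmark_lt j hj hm
      have hE' := hE j hj
      rw [hat2 (I j) j hD'.1 hD'.2 (lt_of_le_of_ne hE'.1 hm) hE'.2]
      simp only [hα]
      rw [if_neg (by omega : ¬ (l + (j - I j) ≤ l))]
      congr 1
      push_cast [Nat.cast_sub hlt.le]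
      ring
  -- injectivity
  have key : ∀ x y, 1 ≤ x → x < y → I x < x → I y < y →
      jfun k l (I y) ≠ y → x - I x ≠ y - I y := by
    intro x y hx hxy hIx hIy hmy hxyeq
    obtain ⟨d, rfl⟩ : ∃ d, y = x + d := ⟨y - x, by omega⟩
    have hd1 : 1 ≤ d := by omega
    have hc := hK (d - 1) x hx
    have hs := hG (x + (d - 1)) (by omega)
    have he : x + (d - 1) + 1 = x + d := by omega
    rw [he] at hs
    have hIyd : I (x + d) = I x + d := by omega
    have heq : I (x + (d - 1) + 1) = I (x + (d - 1)) + 1 := by rw [he]; omega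
    have hfin := hH (x + (d - 1)) (by omega) heq
    rw [he] at hfin
    exact hmy hfin
  have hinj : Set.InjOn σ ↑(Finset.Icc 1 k) := by
    intro a ha b hb hab
    simp only [Finset.coe_Icc, Set.mem_Icc] at ha hb
    by_cases hma : jfun k l (I a) = a <;> by_cases hmb : jfun k l (I b) = b
    · simp only [hσ, if_pos hma, if_pos hmb] at hab
      rw [← hma, ← hmb, hab]
    · exfalso
      simp only [hσ, if_pos hma, if_neg hmb] at hab
      have h1 := (hD a ha.1 ha.2).2
      have h2 := hmark_lt b hb.1 hmb
      omega
    · exfalso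
      simp only [hσ, if_neg hma, if_pos hmb] at hab
      have h1 := (hD b hb.1 hb.2).2
      have h2 := hmark_lt a ha.1 hma
      omega
    · simp only [hσ, if_neg hma, if_neg hmb] at hab
      have hla := hmark_lt a ha.1 hma
      have hlb := hmark_lt b hb.1 hmb
      rcases Nat.lt_trichotomy a b with h | h | h
      · exact absurd (by omega : a - I a = b - I b) (key a b ha.1 h hla hlb hmb)
      · exact h
      · exact absurd (by omega : b - I b = a - I a) (key b a hb.1 h hlb hla hma)
  have hsub : (Finset.Icc 1 k).image σ ⊆ Finset.Icc 1 k := by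
    intro x hx
    simp only [Finset.mem_image] at hx
    obtain ⟨j, hj, rfl⟩ := hx
    simp only [Finset.mem_Icc] at hj ⊢
    exact hrange j hj.1 hj.2
  have himg : (Finset.Icc 1 k).image σ = Finset.Icc 1 k := by
    apply Finset.eq_of_subset_of_card_le hsub
    rw [Finset.card_image_of_injOn hinj]
  have hmapval : (Finset.Icc 1 k).val.map σ = (Finset.Icc 1 k).val := by
    rw [← Finset.image_val_of_injOn hinj, himg]
  constructor
  · have h1 : (Finset.Icc 1 k).val.map at' = (Finset.Icc 1 k).val.map (α ∘ σ) := by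
      apply Multiset.map_congr rfl
      intro j hj
      rw [Finset.mem_val, Finset.mem_Icc] at hj
      exact hval j hj.1 hj.2
    rw [h1, ← Multiset.map_map, hmapval]
  · intro j hj hjk
    have hD' := hD j hj hjk
    have hkr : (0:ℝ) < (k:ℝ) := by exact_mod_cast hk0
    have hlr : (0:ℝ) < (l:ℝ) := by exact_mod_cast hl0
    by_cases hm : jfun k l (I j) = j
    · have h := hat1 (I j) hD'.1 hD'.2
      rw [hm] at h
      rw [h]
      have hj' := hm
      rw [jfun_eq k l (I j) hD'.1] at hj'
      have e : (j - 1) * l = (I j - 1) * k / l * l := by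
        rw [show j - 1 = (I j - 1) * k / l from by omega]
      have h2 := Nat.div_mul_le_self ((I j - 1) * k) l
      have hfl : (j - 1) * l ≤ (I j - 1) * k := by omega
      have hcast : ((j:ℝ) - 1) * l ≤ ((I j : ℝ) - 1) * k := by
        have h1 : (((j - 1) * l : ℕ) : ℝ) ≤ (((I j - 1) * k : ℕ) : ℝ) := by
          exact_mod_cast hfl
        push_cast [Nat.cast_sub hj, Nat.cast_sub hD'.1] at h1
        exact h1
      rw [div_le_div_iff₀ hkr hlr]
      have hrl : r * l ≤ k := (le_div_iff₀ hlr).mp hrp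
      nlinarith [hcast, hrl]
    · have hE' := hE j hj
      have hlt : jfun k l (I j) < j := lt_of_le_of_ne hE'.1 hm
      rw [hat2 (I j) j hD'.1 hD'.2 hlt hE'.2]
      have hjf := jfun_eq k l (I j) hD'.1
      have hdm := Nat.div_add_mod ((I j - 1) * k) l
      have hmod := Nat.mod_lt ((I j - 1) * k) hl0
      have hq : (I j - 1) * k / l + 2 ≤ j := by omega
      have h3 : l * ((I j - 1) * k / l + 2) ≤ l * j := Nat.mul_le_mul_left l hq
      have e : l * ((I j - 1) * k / l + 2) = l * ((I j - 1) * k / l) + 2 * l := by ring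
      have e2 : l * ((I j - 1) * k / l) = (I j - 1) * k / l * l := Nat.mul_comm _ _
      have hnat : (I j - 1) * k + l + 1 ≤ l * j := by omega
      have hnc : ((I j : ℝ) - 1) * k + l + 1 ≤ (l : ℝ) * j := by
        have h1 : (((I j - 1) * k + l + 1 : ℕ) : ℝ) ≤ ((l * j : ℕ) : ℝ) := by
          exact_mod_cast hnat
        push_cast [Nat.cast_sub hD'.1] at h1
        exact h1
      have hkl : (0:ℝ) < (k:ℝ) - l := by
        have : (l:ℝ) < k := by exact_mod_cast hlk
        linarith
      rw [div_le_div_iff₀ hkr hkl]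
      nlinarith [hnc, mul_pos hlr hr]
end

section
/- Define W(x) = √(2 − √x) / (2π·x^{3/4}) for x ∈ (0,4). Then W(x) ≥ 0 on (0,4) and for every natural number m, ∫₀⁴ x^m · W(x) dx = A_m(2, 1/2) = (1/2)·Γ(2m + 1/2) / (m!·Γ(m + 3/2)). -/
open Real MeasureTheory

lemma gamma_prod (x : ℝ) (hx : 0 < x) (n : ℕ) :
    ∏ j ∈ Finset.range n, (x + j) = Real.Gamma (x + n) / Real.Gamma x := by
  induction n with
  | zero => simp [div_self (Real.Gamma_pos_of_pos hx).ne']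
  | succ n ih =>
      have hxn : (0:ℝ) < x + n := by positivity
      have hG : Real.Gamma (x + (n + 1 : ℕ)) = (x + n) * Real.Gamma (x + n) := by
        have h := Real.Gamma_add_one hxn.ne'
        rw [show (x + ((n:ℕ)+1 : ℕ) : ℝ) = (x + n) + 1 by push_cast; ring, h]
      rw [Finset.prod_range_succ, ih, hG]
      have h0 := (Real.Gamma_pos_of_pos hx).ne'
      field_simp

lemma real_beta {a b : ℝ} (ha : 0 < a) (hb : 0 < b) :
    ∫ x in (0:ℝ)..1, x ^ (a - 1) * (1 - x) ^ (b - 1)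
      = Real.Gamma a * Real.Gamma b / Real.Gamma (a + b) := by
  set I : ℝ := ∫ x in (0:ℝ)..1, x ^ (a - 1) * (1 - x) ^ (b - 1) with hI
  have h1 : Complex.betaIntegral a b = (I : ℂ) := by
    rw [hI, Complex.betaIntegral, ← intervalIntegral.integral_ofReal]
    refine intervalIntegral.integral_congr fun x hx => ?_
    rw [Set.uIcc_of_le (by norm_num : (0:ℝ) ≤ 1)] at hx
    have hx1 : (0:ℝ) ≤ 1 - x := by linarith [hx.2]
    rw [Complex.ofReal_mul, Complex.ofReal_cpow hx.1, Complex.ofReal_cpow hx1]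
    push_cast
    ring
  have h2 := Complex.Gamma_mul_Gamma_eq_betaIntegral
    (s := (a:ℂ)) (t := (b:ℂ)) (by simpa using ha) (by simpa using hb)
  rw [h1, ← Complex.ofReal_add, Complex.Gamma_ofReal, Complex.Gamma_ofReal,
    Complex.Gamma_ofReal] at h2
  have h3 : Real.Gamma a * Real.Gamma b = Real.Gamma (a + b) * I := by exact_mod_cast h2
  have hab : (0:ℝ) < Real.Gamma (a + b) := Real.Gamma_pos_of_pos (by linarith)
  rw [eq_div_iff hab.ne']
  linarith [h3]

lemma raney_eq (m : ℕ) : raney 2 (1/2) m =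
    (1 / 2) * Real.Gamma (2 * (m : ℝ) + 1 / 2) /
      ((Nat.factorial m : ℝ) * Real.Gamma ((m : ℝ) + 3 / 2)) := by
  have hπ : (0:ℝ) < Real.sqrt π := Real.sqrt_pos.mpr pi_pos
  have h32 : Real.Gamma ((3:ℝ)/2) = Real.sqrt π / 2 := by
    rw [show (3:ℝ)/2 = 1/2 + 1 by norm_num, Real.Gamma_add_one (by norm_num),
      Real.Gamma_one_half_eq]
    ring
  cases m with
  | zero =>
      simp only [raney, Nat.cast_zero, mul_zero, zero_add, Nat.factorial_zero, Nat.cast_one,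
        one_mul]
      rw [h32, Real.Gamma_one_half_eq]
      field_simp
  | succ n =>
      have hx : (0:ℝ) < (n:ℝ) + 5/2 := by positivity
      have hprod : (∏ i ∈ Finset.Icc 1 n, (((n : ℝ) + 1) * 2 + 1/2 - (i : ℝ)))
          = Real.Gamma (((n:ℝ) + 5/2) + n) / Real.Gamma ((n:ℝ) + 5/2) := by
        rw [← gamma_prod ((n:ℝ) + 5/2) hx n]
        refine Finset.prod_nbij' (fun i => n - i) (fun j => n - j) ?_ ?_ ?_ ?_ ?_
        · intro i hi
          simp only [Finset.mem_Icc] at hi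
          simp only [Finset.mem_range]
          omega
        · intro j hj
          simp only [Finset.mem_range] at hj
          simp only [Finset.mem_Icc]
          omega
        · intro i hi
          simp only [Finset.mem_Icc] at hi
          show n - (n - i) = i
          omega
        · intro j hj
          simp only [Finset.mem_range] at hj
          show n - (n - j) = j
          omega
        · intro i hi
          simp only [Finset.mem_Icc] at hi
          rw [Nat.cast_sub hi.2]
          ring
      rw [show raney 2 (1/2) (n+1) = ((1:ℝ)/2 / (Nat.factorial (n + 1) : ℝ)) *
          ∏ i ∈ Finset.Icc 1 n, (((n : ℝ) + 1) * 2 + 1/2 - (i : ℝ)) from rfl, hprod]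
      have hG1 : (0:ℝ) < Real.Gamma ((n:ℝ) + 5/2) := Real.Gamma_pos_of_pos hx
      have hf : (0:ℝ) < (Nat.factorial (n+1) : ℝ) := by positivity
      rw [show (2 * ((n:ℕ)+1 : ℕ) + 1/2 : ℝ) = ((n:ℝ) + 5/2) + n by push_cast; ring,
        show (((n:ℕ)+1 : ℕ) + 3/2 : ℝ) = (n:ℝ) + 5/2 by push_cast; ring]
      rw [div_mul_div_comm]

lemma integral_eq (m : ℕ) :
    (∫ x in (0:ℝ)..4,
        x ^ m * (Real.sqrt (2 - Real.sqrt x) / (2 * π * x ^ ((3 : ℝ) / 4))))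
      = (1 / 2) * Real.Gamma (2 * (m : ℝ) + 1 / 2) /
          ((Nat.factorial m : ℝ) * Real.Gamma ((m : ℝ) + 3 / 2)) := by
  set g : ℝ → ℝ := fun x => x ^ m * (Real.sqrt (2 - Real.sqrt x) / (2 * π * x ^ ((3 : ℝ) / 4)))
    with hg
  have himg : Set.Ioo (0:ℝ) 4 = (fun s : ℝ => 4 * s ^ 2) '' Set.Ioo 0 1 := by
    ext y
    constructor
    · rintro ⟨hy0, hy4⟩
      have hsy : (0:ℝ) < Real.sqrt y := Real.sqrt_pos.mpr hy0
      have hlt : Real.sqrt y < 2 := by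
        have h4 : Real.sqrt y < Real.sqrt 4 := Real.sqrt_lt_sqrt hy0.le hy4
        rwa [show (4:ℝ) = 2^2 by norm_num, Real.sqrt_sq (by norm_num : (0:ℝ) ≤ 2)] at h4
      refine ⟨Real.sqrt y / 2, ⟨by positivity, by linarith⟩, ?_⟩
      have hsq := Real.sq_sqrt hy0.le
      show 4 * (Real.sqrt y / 2) ^ 2 = y
      nlinarith [hsq]
    · rintro ⟨s, ⟨hs0, hs1⟩, rfl⟩
      exact ⟨by positivity, by show 4 * s ^ 2 < 4; nlinarith⟩
  have hderiv : ∀ s : ℝ, HasDerivAt (fun s : ℝ => 4 * s ^ 2) (8 * s) s := by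
    intro s
    have h := (hasDerivAt_pow 2 s).const_mul (4:ℝ)
    norm_num at h
    rw [show (8:ℝ) * s = 4 * (2 * s) by ring]
    exact h
  have hinj : Set.InjOn (fun s : ℝ => 4 * s ^ 2) (Set.Ioo 0 1) := by
    intro a ha b hb h
    simp only [] at h
    have h2 : a ^ 2 = b ^ 2 := by nlinarith
    rw [← Real.sqrt_sq ha.1.le, ← Real.sqrt_sq hb.1.le, h2]
  have hchg : ∫ x in Set.Ioo (0:ℝ) 4, g x
      = ∫ s in Set.Ioo (0:ℝ) 1, |8 * s| • g (4 * s ^ 2) := by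
    rw [himg]
    exact integral_image_eq_integral_abs_deriv_smul measurableSet_Ioo
      (fun s _ => (hderiv s).hasDerivWithinAt) hinj g
  have hpt : ∀ s ∈ Set.Ioo (0:ℝ) 1, |8 * s| • g (4 * s ^ 2)
      = (2 * 4 ^ m / π) *
        (s ^ ((2 * (m:ℝ) + 1/2) - 1) * (1 - s) ^ ((3:ℝ)/2 - 1)) := by
    intro s hs
    obtain ⟨hs0, hs1⟩ := hs
    have h2s : (0:ℝ) < 2 * s := by linarith
    have hsq : Real.sqrt (4 * s ^ 2) = 2 * s := by
      rw [show 4 * s ^ 2 = (2 * s) ^ 2 by ring, Real.sqrt_sq h2s.le]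
    have hsub : Real.sqrt (2 - 2 * s) = Real.sqrt 2 * Real.sqrt (1 - s) := by
      rw [show (2:ℝ) - 2 * s = 2 * (1 - s) by ring, Real.sqrt_mul (by norm_num)]
    have hrp : (4 * s ^ 2 : ℝ) ^ ((3:ℝ)/4) = 2 ^ ((3:ℝ)/2) * s ^ ((3:ℝ)/2) := by
      rw [show (4 * s ^ 2 : ℝ) = (2 * s) ^ (2:ℕ) by ring, ← Real.rpow_natCast (2 * s) 2,
        ← Real.rpow_mul h2s.le]
      norm_num
      rw [Real.mul_rpow (by norm_num) hs0.le]
    have h2pow : (2:ℝ) ^ ((3:ℝ)/2) = 2 * Real.sqrt 2 := by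
      rw [show (3:ℝ)/2 = 1 + 1/2 by norm_num, Real.rpow_add two_pos, Real.rpow_one,
        ← Real.sqrt_eq_rpow]
    have hnp : (4 * s ^ 2 : ℝ) ^ m = 4 ^ m * s ^ (2 * m) := by
      rw [mul_pow, pow_mul]
    have h1s : Real.sqrt (1 - s) = (1 - s) ^ ((3:ℝ)/2 - 1) := by
      rw [show (3:ℝ)/2 - 1 = 1/2 by norm_num, Real.sqrt_eq_rpow]
    have hs32 : (0:ℝ) < s ^ ((3:ℝ)/2) := Real.rpow_pos_of_pos hs0 _
    have hskey : s ^ ((2 * (m:ℝ) + 1/2) - 1) = s ^ (2 * m) * s / s ^ ((3:ℝ)/2) := by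
      rw [eq_div_iff hs32.ne', ← Real.rpow_add hs0, ← Real.rpow_natCast s (2 * m)]
      nth_rewrite 3 [← Real.rpow_one s]
      rw [← Real.rpow_add hs0]
      congr 1
      push_cast
      ring
    have ht2 : Real.sqrt 2 * Real.sqrt 2 = 2 := Real.mul_self_sqrt (by norm_num)
    have ht0 : (0:ℝ) < Real.sqrt 2 := Real.sqrt_pos.mpr (by norm_num)
    rw [smul_eq_mul, hg]
    simp only []
    rw [hsq, hsub, hrp, h2pow, hnp, h1s, hskey,
      abs_of_pos (by linarith : (0:ℝ) < 8 * s)]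
    have hπ := pi_pos
    field_simp
    ring_nf
  have hbeta := real_beta (a := 2 * (m:ℝ) + 1/2) (b := (3:ℝ)/2) (by positivity) (by norm_num)
  have hIoo : (∫ s in Set.Ioo (0:ℝ) 1,
      (2 * 4 ^ m / π) * (s ^ ((2 * (m:ℝ) + 1/2) - 1) * (1 - s) ^ ((3:ℝ)/2 - 1)))
      = (2 * 4 ^ m / π) * (Real.Gamma (2 * (m:ℝ) + 1/2) * Real.Gamma ((3:ℝ)/2)
          / Real.Gamma (2 * (m:ℝ) + 1/2 + 3/2)) := by
    rw [MeasureTheory.integral_const_mul, ← MeasureTheory.integral_Ioc_eq_integral_Ioo,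
      ← intervalIntegral.integral_of_le (by norm_num : (0:ℝ) ≤ 1), hbeta]
  rw [intervalIntegral.integral_of_le (by norm_num : (0:ℝ) ≤ 4),
    MeasureTheory.integral_Ioc_eq_integral_Ioo]
  rw [show (∫ x in Set.Ioo (0:ℝ) 4,
      x ^ m * (Real.sqrt (2 - Real.sqrt x) / (2 * π * x ^ ((3 : ℝ) / 4))))
      = ∫ x in Set.Ioo (0:ℝ) 4, g x from rfl, hchg,
    MeasureTheory.setIntegral_congr_fun measurableSet_Ioo hpt, hIoo]
  -- final Gamma algebra
  have hπ : (0:ℝ) < Real.sqrt π := Real.sqrt_pos.mpr pi_pos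
  have hππ : Real.sqrt π * Real.sqrt π = π := Real.mul_self_sqrt pi_pos.le
  have h32 : Real.Gamma ((3:ℝ)/2) = Real.sqrt π / 2 := by
    rw [show (3:ℝ)/2 = 1/2 + 1 by norm_num, Real.Gamma_add_one (by norm_num),
      Real.Gamma_one_half_eq]
    ring
  have hfac2 : Real.Gamma (2 * (m:ℝ) + 1/2 + 3/2) = (Nat.factorial (2 * m + 1) : ℝ) := by
    rw [show (2 * (m:ℝ) + 1/2 + 3/2) = ((2 * m + 1 : ℕ) : ℝ) + 1 by push_cast; ring]
    exact Real.Gamma_nat_eq_factorial (2 * m + 1)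
  have hdup := Real.Gamma_mul_Gamma_add_half ((m:ℝ) + 1)
  rw [show 2 * ((m:ℝ) + 1) = ((2 * m + 1 : ℕ) : ℝ) + 1 by push_cast; ring,
    Real.Gamma_nat_eq_factorial,
    show ((m:ℝ) + 1) = ((m:ℕ) : ℝ) + 1 by push_cast; ring, Real.Gamma_nat_eq_factorial,
    show ((m:ℕ):ℝ) + 1 + 1/2 = (m:ℝ) + 3/2 by push_cast; ring,
    show (1 - (((2 * m + 1 : ℕ):ℝ) + 1)) = -((2 * m + 1 : ℕ) : ℝ) by push_cast; ring,
    Real.rpow_neg (by norm_num : (0:ℝ) ≤ 2), Real.rpow_natCast] at hdup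
  have hpow : (2:ℝ) ^ (2 * m + 1) = 2 * 4 ^ m := by
    rw [pow_succ, pow_mul]
    norm_num
    ring
  rw [hpow] at hdup
  -- hdup : m ! * Γ(m + 3/2) = (2m+1)! * (2 * 4^m)⁻¹ * √π
  have hf1 : (0:ℝ) < (Nat.factorial m : ℝ) := by positivity
  have hf2 : (0:ℝ) < (Nat.factorial (2 * m + 1) : ℝ) := by positivity
  have h4m : (0:ℝ) < (4:ℝ) ^ m := by positivity
  have hGexp : Real.Gamma ((m:ℝ) + 3/2)
      = (Nat.factorial (2 * m + 1) : ℝ) * Real.sqrt π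
        / (2 * 4 ^ m * (Nat.factorial m : ℝ)) := by
    rw [eq_div_iff (by positivity)]
    have h : ((2:ℝ) * 4 ^ m) * ((2:ℝ) * 4 ^ m)⁻¹ = 1 := mul_inv_cancel₀ (by positivity)
    linear_combination (2 * 4 ^ m) * hdup
      + ((Nat.factorial (2 * m + 1) : ℝ) * Real.sqrt π) * h
  set G1 := Real.Gamma (2 * (m:ℝ) + 1/2) with hG1
  rw [h32, hfac2, hGexp]
  field_simp
  linear_combination G1 * hππ

/-- For `W(x) = √(2 − √x)/(2π·x^(3/4))` on `(0,4)`: `W ≥ 0` on `(0,4)` and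
`∫₀⁴ x^m·W(x) dx = A_m(2,1/2) = (1/2)·Γ(2m + 1/2)/(m!·Γ(m + 3/2))` for every `m`. -/
theorem stmt_7 :
    (∀ x ∈ Set.Ioo (0 : ℝ) 4,
      0 ≤ Real.sqrt (2 - Real.sqrt x) / (2 * π * x ^ ((3 : ℝ) / 4))) ∧
    ∀ m : ℕ,
      (∫ x in (0:ℝ)..4,
        x ^ m * (Real.sqrt (2 - Real.sqrt x) / (2 * π * x ^ ((3 : ℝ) / 4))))
      = raney 2 (1 / 2) m ∧
      raney 2 (1 / 2) m =
        (1 / 2) * Gamma (2 * (m : ℝ) + 1 / 2) /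
          ((Nat.factorial m : ℝ) * Gamma ((m : ℝ) + 3 / 2)) := by
  constructor
  · intro x hx
    exact div_nonneg (Real.sqrt_nonneg _)
      (mul_nonneg (mul_nonneg (by norm_num) pi_pos.le) (Real.rpow_nonneg hx.1.le _))
  · intro m
    exact ⟨by rw [integral_eq m, raney_eq m], raney_eq m⟩
end

section
/- Define W(x) = (√x + 1)·√(2 − √x) / (2π·x^{1/4}) for x ∈ (0,4). Then W(x) ≥ 0 on (0,4) and for every natural number m, ∫₀⁴ x^m · W(x) dx = A_m(2, 3/2) = (3/2)·Γ(2m + 3/2) / (m!·Γ(m + 5/2)). -/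
open Real

section Aux

open MeasureTheory intervalIntegral

lemma realBeta {u v : ℝ} (hu : 0 < u) (hv : 0 < v) :
    ∫ x in (0:ℝ)..1, x ^ (u-1) * (1-x) ^ (v-1) = Gamma u * Gamma v / Gamma (u+v) := by
  have huv : Real.Gamma (u + v) ≠ 0 := (Real.Gamma_pos_of_pos (by linarith)).ne'
  have h := Complex.Gamma_mul_Gamma_eq_betaIntegral (s := u) (t := v)
    (by simpa using hu) (by simpa using hv)
  have hbeta : Complex.betaIntegral u v =
      ((∫ x in (0:ℝ)..1, x ^ (u-1) * (1-x) ^ (v-1) : ℝ) : ℂ) := by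
    rw [Complex.betaIntegral, ← intervalIntegral.integral_ofReal]
    refine intervalIntegral.integral_congr fun x hx => ?_
    rw [Set.uIcc_of_le (by norm_num)] at hx
    rw [Complex.ofReal_mul, Complex.ofReal_cpow hx.1,
      Complex.ofReal_cpow (by linarith [hx.2] : (0:ℝ) ≤ 1 - x)]
    push_cast
    ring
  rw [hbeta, ← Complex.ofReal_add, Complex.Gamma_ofReal, Complex.Gamma_ofReal,
    Complex.Gamma_ofReal, ← Complex.ofReal_mul, ← Complex.ofReal_mul] at h
  have := Complex.ofReal_injective h
  rw [this]
  field_simp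

lemma Jval {a : ℝ} (ha : 0 < a) :
    ∫ t in (0:ℝ)..2, t ^ a * Real.sqrt (2 - t)
      = 2 ^ (a + 3/2) * (Gamma (a+1) * Gamma (3/2) / Gamma (a + 5/2)) := by
  have h2 : (2:ℝ) • ∫ s in (0:ℝ)..1, (2*s) ^ a * Real.sqrt (2 - 2*s)
      = ∫ t in (2*0:ℝ)..(2*1), t ^ a * Real.sqrt (2 - t) := by
    simpa using intervalIntegral.smul_integral_comp_mul_left
      (fun t => t ^ a * Real.sqrt (2 - t)) 2 (a := 0) (b := 1)
  norm_num at h2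
  rw [← h2]
  have h3 : ∫ s in (0:ℝ)..1, (2*s) ^ a * Real.sqrt (2 - 2*s)
      = (2:ℝ)^(a + 1/2) * ∫ s in (0:ℝ)..1, s ^ a * (1-s) ^ ((1:ℝ)/2) := by
    rw [← intervalIntegral.integral_const_mul]
    refine intervalIntegral.integral_congr fun s hs => ?_
    rw [Set.uIcc_of_le (by norm_num)] at hs
    rw [Real.mul_rpow (by norm_num) hs.1, Real.sqrt_eq_rpow,
      show (2:ℝ) - 2*s = 2 * (1-s) by ring,
      Real.mul_rpow (by norm_num) (by linarith [hs.2]),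
      Real.rpow_add (by norm_num : (0:ℝ) < 2)]
    ring
  rw [h3]
  have hb := realBeta (u := a+1) (v := 3/2) (by linarith) (by norm_num)
  norm_num at hb
  rw [hb]
  rw [show a + 1 + 3/2 = a + 5/2 by ring, show a + 3/2 = 1 + (a + 1/2) by ring,
    Real.rpow_add (by norm_num : (0:ℝ) < 2)]
  norm_num
  rw [Real.rpow_add two_pos 1, Real.rpow_one, Real.rpow_add two_pos a]
  ring

lemma contJ {a : ℝ} (ha : 0 < a) : Continuous (fun t : ℝ => t ^ a * Real.sqrt (2 - t)) :=
  (Real.continuous_rpow_const ha.le).mul ((continuous_const.sub continuous_id).sqrt)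

lemma intJ {a : ℝ} (ha : 0 < a) :
    IntegrableOn (fun t : ℝ => t ^ a * Real.sqrt (2 - t)) (Set.Ioo 0 2) :=
  ((contJ ha).integrableOn_Icc (a := 0) (b := 2)).mono_set Set.Ioo_subset_Icc_self

lemma imageSq : (fun t : ℝ => t ^ 2) '' Set.Ioo 0 2 = Set.Ioo (0:ℝ) 4 := by
  ext x
  simp only [Set.mem_image, Set.mem_Ioo]
  constructor
  · rintro ⟨t, ⟨ht0, ht2⟩, rfl⟩
    exact ⟨by positivity, by nlinarith⟩
  · rintro ⟨hx0, hx4⟩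
    refine ⟨Real.sqrt x, ⟨Real.sqrt_pos.mpr hx0, ?_⟩, Real.sq_sqrt hx0.le⟩
    have : Real.sqrt x < Real.sqrt 4 := Real.sqrt_lt_sqrt hx0.le hx4
    simpa [show Real.sqrt 4 = 2 by
      rw [show (4:ℝ) = 2^2 by norm_num, Real.sqrt_sq (by norm_num)]] using this

lemma substMain (m : ℕ) :
    (∫ x in (0:ℝ)..4,
        x ^ m * ((Real.sqrt x + 1) * Real.sqrt (2 - Real.sqrt x) / (2 * π * x ^ ((1 : ℝ) / 4))))
    = (1/π) * ((∫ t in (0:ℝ)..2, t ^ ((2*m : ℝ) + 3/2) * Real.sqrt (2 - t))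
        + ∫ t in (0:ℝ)..2, t ^ ((2*m : ℝ) + 1/2) * Real.sqrt (2 - t)) := by
  rw [intervalIntegral.integral_of_le (by norm_num : (0:ℝ) ≤ 4),
    MeasureTheory.integral_Ioc_eq_integral_Ioo, ← imageSq]
  rw [MeasureTheory.integral_image_eq_integral_abs_deriv_smul (f' := fun t => 2*t)
    measurableSet_Ioo
    (fun t _ => by simpa using (hasDerivAt_pow 2 t).hasDerivWithinAt)
    (fun a ha b hb h => by
      simp only [Set.mem_Ioo] at ha hb
      nlinarith [ha.1, hb.1])]
  have key : ∀ t ∈ Set.Ioo (0:ℝ) 2,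
      |2*t| • ((t^2) ^ m * ((Real.sqrt (t^2) + 1) * Real.sqrt (2 - Real.sqrt (t^2)) /
        (2 * π * (t^2) ^ ((1 : ℝ) / 4))))
      = (1/π) * (t ^ ((2*m : ℝ) + 3/2) * Real.sqrt (2 - t)
          + t ^ ((2*m : ℝ) + 1/2) * Real.sqrt (2 - t)) := by
    intro t ht
    obtain ⟨ht0, ht2⟩ := ht
    rw [Real.sqrt_sq ht0.le]
    have h14 : (t^2 : ℝ) ^ ((1:ℝ)/4) = t ^ ((1:ℝ)/2) := by
      rw [← Real.rpow_natCast t 2, ← Real.rpow_mul ht0.le]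
      norm_num
    have hpow : ((t^2) ^ m : ℝ) = t ^ ((2*m : ℝ)) := by
      rw [← pow_mul, ← Real.rpow_natCast t (2*m)]
      push_cast; ring_nf
    obtain ⟨s, hs⟩ : ∃ s, t ^ ((1:ℝ)/2) = s := ⟨_, rfl⟩
    have hsne : s ≠ 0 := by rw [← hs]; positivity
    have hts : t = s^2 := by rw [← hs, sq, ← Real.rpow_add ht0]; norm_num
    have h32 : t ^ ((2*m : ℝ) + 3/2) = t ^ ((2*m:ℝ)) * (t * s) := by
      rw [← hs, Real.rpow_add ht0, show (3:ℝ)/2 = 1 + 1/2 by norm_num, Real.rpow_add ht0,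
        Real.rpow_one]
    have h12 : t ^ ((2*m : ℝ) + 1/2) = t ^ ((2*m:ℝ)) * s := by
      rw [← hs, Real.rpow_add ht0]
    have hpi : (π:ℝ) ≠ 0 := Real.pi_ne_zero
    rw [abs_of_pos (by linarith), smul_eq_mul, h14, hpow, hs, h32, h12, hts]
    field_simp
  rw [MeasureTheory.setIntegral_congr_fun measurableSet_Ioo key]
  rw [MeasureTheory.integral_const_mul]
  congr 1
  rw [MeasureTheory.integral_add ((intJ (by positivity)).mono_set le_rfl)
      ((intJ (by positivity)).mono_set le_rfl)]
  rw [intervalIntegral.integral_of_le (by norm_num : (0:ℝ) ≤ 2),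
    MeasureTheory.integral_Ioc_eq_integral_Ioo,
    intervalIntegral.integral_of_le (by norm_num : (0:ℝ) ≤ 2),
    MeasureTheory.integral_Ioc_eq_integral_Ioo]

lemma Gamma_add_nat {c : ℝ} (hc : 0 < c) (n : ℕ) :
    Gamma (c + n) = Gamma c * ∏ j ∈ Finset.range n, (c + j) := by
  induction n with
  | zero => simp
  | succ n ih =>
    have h1 : c + (n+1 : ℕ) = (c + n) + 1 := by push_cast; ring
    rw [h1, Real.Gamma_add_one (by positivity), ih, Finset.prod_range_succ]
    ring

lemma finalAlg (m : ℕ) :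
    (1/π) * ((2:ℝ) ^ ((2*(m:ℝ)) + 3/2 + 3/2) *
        (Gamma ((2*(m:ℝ))+3/2+1) * Gamma (3/2) / Gamma ((2*(m:ℝ))+3/2 + 5/2))
      + (2:ℝ) ^ ((2*(m:ℝ)) + 1/2 + 3/2) *
        (Gamma ((2*(m:ℝ))+1/2+1) * Gamma (3/2) / Gamma ((2*(m:ℝ))+1/2 + 5/2)))
    = (3/2) * Gamma (2*(m:ℝ)+3/2) / ((m.factorial : ℝ) * Gamma ((m:ℝ)+5/2)) := by
  have h32 : Gamma (3/2 : ℝ) = Real.sqrt π / 2 := by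
    rw [show (3:ℝ)/2 = 1/2 + 1 by norm_num, Real.Gamma_add_one (by norm_num),
      Real.Gamma_one_half_eq]
    ring
  have e1 : Gamma ((2*(m:ℝ))+3/2+1) = ((2*(m:ℝ))+3/2) * Gamma ((2*(m:ℝ))+3/2) :=
    Real.Gamma_add_one (by positivity)
  have e2 : Gamma ((2*(m:ℝ))+1/2+1) = Gamma ((2*(m:ℝ))+3/2) := by
    rw [show (2*(m:ℝ))+1/2+1 = 2*(m:ℝ)+3/2 by ring]
  have e3 : Gamma ((2*(m:ℝ))+3/2+5/2) = ((2*m+3).factorial : ℝ) := by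
    rw [show (2*(m:ℝ))+3/2+5/2 = ((2*m+3:ℕ):ℝ)+1 by push_cast; ring,
      Real.Gamma_nat_eq_factorial]
  have e4 : Gamma ((2*(m:ℝ))+1/2+5/2) = ((2*m+2).factorial : ℝ) := by
    rw [show (2*(m:ℝ))+1/2+5/2 = ((2*m+2:ℕ):ℝ)+1 by push_cast; ring,
      Real.Gamma_nat_eq_factorial]
  have p1 : (2:ℝ) ^ ((2*(m:ℝ)) + 3/2 + 3/2) = (2:ℝ)^(2*m+3 : ℕ) := by
    rw [show (2*(m:ℝ)) + 3/2 + 3/2 = ((2*m+3:ℕ):ℝ) by push_cast; ring, Real.rpow_natCast]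
  have p2 : (2:ℝ) ^ ((2*(m:ℝ)) + 1/2 + 3/2) = (2:ℝ)^(2*m+2 : ℕ) := by
    rw [show (2*(m:ℝ)) + 1/2 + 3/2 = ((2*m+2:ℕ):ℝ) by push_cast; ring, Real.rpow_natCast]
  have hdup := Real.Gamma_mul_Gamma_add_half ((m:ℝ)+2)
  rw [show ((m:ℝ)+2) + 1/2 = (m:ℝ)+5/2 by ring,
    show (m:ℝ)+2 = ((m+1:ℕ):ℝ)+1 by push_cast; ring, Real.Gamma_nat_eq_factorial,
    show 2*(((m+1:ℕ):ℝ)+1) = ((2*m+3:ℕ):ℝ)+1 by push_cast; ring,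
    Real.Gamma_nat_eq_factorial,
    show 1-(((2*m+3:ℕ):ℝ)+1) = -(((2*m+3:ℕ):ℝ)) by push_cast; ring,
    Real.rpow_neg (by norm_num), Real.rpow_natCast] at hdup
  have hfne : ((m+1).factorial : ℝ) ≠ 0 := by positivity
  have h2ne : ((2:ℝ)^(2*m+3:ℕ)) ≠ 0 := by positivity
  have hG52 : Gamma ((m:ℝ)+5/2)
      = ((2*m+3).factorial : ℝ) / ((2:ℝ)^(2*m+3:ℕ) * ((m+1).factorial : ℝ)) * Real.sqrt π := by
    field_simp at hdup ⊢
    linarith [hdup]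
  have hsq : Real.sqrt π * Real.sqrt π = π := Real.mul_self_sqrt Real.pi_pos.le
  have hf1 : ((2*m+3).factorial : ℝ) = (2*(m:ℝ)+3) * ((2*m+2).factorial : ℝ) := by
    rw [show 2*m+3 = (2*m+2)+1 by ring, Nat.factorial_succ]
    push_cast; ring
  have hf2 : ((m+1).factorial : ℝ) = ((m:ℝ)+1) * (m.factorial : ℝ) := by
    rw [Nat.factorial_succ]; push_cast; ring
  have hp3 : ((2:ℝ)^(2*m+3:ℕ)) = 2 * (2:ℝ)^(2*m+2:ℕ) := by
    rw [pow_succ]; ring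
  have hfne2 : ((2*m+2).factorial : ℝ) ≠ 0 := by positivity
  have hmne : (m.factorial : ℝ) ≠ 0 := by positivity
  have hsne : Real.sqrt π ≠ 0 := by positivity
  have hpine : (π:ℝ) ≠ 0 := Real.pi_ne_zero
  rw [e1, e2, e3, e4, p1, p2, h32, hG52, hf1, hf2, hp3, ← hsq]
  field_simp
  ring_nf
  rw [Real.sq_sqrt Real.pi_pos.le]
  linear_combination (6 + 6 * (m:ℝ)) * hsq

end Aux

lemma raneyGamma (m : ℕ) : raney 2 (3/2) m =
    (3 / 2) * Gamma (2 * (m : ℝ) + 3 / 2) /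
      ((Nat.factorial m : ℝ) * Gamma ((m : ℝ) + 5 / 2)) := by
  cases m with
  | zero =>
    simp only [raney, Nat.factorial_zero, Nat.cast_zero]
    rw [show (2:ℝ) * 0 + 3/2 = 3/2 by ring, show (0:ℝ) + 5/2 = 3/2 + 1 by ring,
      Real.Gamma_add_one (by norm_num)]
    have := Real.Gamma_pos_of_pos (show (0:ℝ) < 3/2 by norm_num)
    field_simp
    norm_num
  | succ m =>
    have hprod : ∏ i ∈ Finset.Icc 1 m, (((m : ℝ) + 1) * 2 + 3/2 - (i : ℝ))
        = ∏ j ∈ Finset.range m, (((m:ℝ) + 7/2) + j) := by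
      rw [show Finset.Icc 1 m = Finset.Ico 1 (m+1) by rfl, Finset.prod_Ico_eq_prod_range]
      simp only [Nat.add_sub_cancel]
      rw [← Finset.prod_range_reflect]
      refine Finset.prod_congr rfl fun j hj => ?_
      rw [Finset.mem_range] at hj
      have h1 : 1 + (m - 1 - j) = m - j := by omega
      have h2 : ((m - j : ℕ) : ℝ) = (m:ℝ) - j := by
        push_cast [Nat.cast_sub hj.le]
        ring
      rw [h1, h2]
      ring
    show (3/2 / (Nat.factorial (m + 1) : ℝ)) *
        ∏ i ∈ Finset.Icc 1 m, (((m : ℝ) + 1) * 2 + 3/2 - (i : ℝ)) = _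
    rw [hprod]
    have hG : Gamma (2 * ((m:ℕ)+1 : ℝ) + 3/2)
        = Gamma ((m:ℝ) + 7/2) * ∏ j ∈ Finset.range m, (((m:ℝ) + 7/2) + j) := by
      rw [show 2 * ((m:ℕ)+1 : ℝ) + 3/2 = ((m:ℝ) + 7/2) + m by push_cast; ring]
      exact Gamma_add_nat (by positivity) m
    have hG7 : Gamma (((m:ℕ)+1 : ℝ) + 5/2) = Gamma ((m:ℝ) + 7/2) := by
      rw [show (((m:ℕ)+1 : ℝ) + 5/2) = (m:ℝ) + 7/2 by push_cast; ring]
    push_cast at hG hG7 ⊢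
    rw [hG, hG7]
    have hne : Gamma ((m:ℝ) + 7/2) ≠ 0 := (Real.Gamma_pos_of_pos (by positivity)).ne'
    field_simp

/-- For `W(x) = (√x + 1)·√(2 − √x)/(2π·x^(1/4))` on `(0,4)`: `W ≥ 0` on `(0,4)`
and `∫₀⁴ x^m·W(x) dx = A_m(2,3/2) = (3/2)·Γ(2m + 3/2)/(m!·Γ(m + 5/2))` for every `m`. -/
theorem stmt_8 :
    (∀ x ∈ Set.Ioo (0 : ℝ) 4,
      0 ≤ (Real.sqrt x + 1) * Real.sqrt (2 - Real.sqrt x) / (2 * π * x ^ ((1 : ℝ) / 4))) ∧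
    ∀ m : ℕ,
      (∫ x in (0:ℝ)..4,
        x ^ m * ((Real.sqrt x + 1) * Real.sqrt (2 - Real.sqrt x) / (2 * π * x ^ ((1 : ℝ) / 4))))
      = raney 2 (3 / 2) m ∧
      raney 2 (3 / 2) m =
        (3 / 2) * Gamma (2 * (m : ℝ) + 3 / 2) /
          ((Nat.factorial m : ℝ) * Gamma ((m : ℝ) + 5 / 2)) := by
  constructor
  · intro x hx
    have hx0 : (0:ℝ) < x := hx.1
    have h1 : 0 ≤ (Real.sqrt x + 1) * Real.sqrt (2 - Real.sqrt x) := by positivity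
    have h2 : 0 < 2 * π * x ^ ((1 : ℝ) / 4) := by positivity
    positivity
  · intro m
    refine ⟨?_, raneyGamma m⟩
    rw [substMain m, Jval (by positivity), Jval (by positivity), raneyGamma m]
    exact finalAlg m
end

section
/- For every natural number m, the Raney numbers satisfy 4^m · A_m(2, 1/2) = A_{2m}(2, 1); explicitly, 4^m · (1/2)·Γ(2m + 1/2) / (m!·Γ(m + 3/2)) = binom(4m+1, 2m) / (4m+1). -/
open Real

lemma prod_shift (n : ℕ) : ∀ (x : ℝ), 0 < x →
    ∏ i ∈ Finset.range n, (x + n - 1 - i) = Gamma (x + n) / Gamma x := by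
  induction n with
  | zero =>
      intro x hx
      simp [div_self (Real.Gamma_pos_of_pos hx).ne']
  | succ n ih =>
      intro x hx
      have h1 : ∀ i ∈ Finset.range n, (x + ((n:ℕ)+1:ℕ) - 1 - (i:ℝ)) = ((x+1) + n - 1 - i) := by
        intro i _; push_cast; ring
      rw [Finset.prod_range_succ, Finset.prod_congr rfl h1, ih (x+1) (by linarith)]
      have hg : Gamma (x + 1 + n) = Gamma (x + ((n:ℕ)+1:ℕ)) := by push_cast; ring_nf
      have hlast : (x + ((n:ℕ)+1:ℕ) - 1 - (n:ℝ)) = x := by push_cast; ring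
      have hG1 : Gamma (x + 1) = x * Gamma x := Real.Gamma_add_one hx.ne'
      rw [hg, hlast, hG1]
      have h2 : Gamma x ≠ 0 := (Real.Gamma_pos_of_pos hx).ne'
      field_simp

lemma icc_prod (m : ℕ) (x : ℝ) (hx : 0 < x) :
    ∏ i ∈ Finset.Icc 1 m, (x + m - i) = Gamma (x + m) / Gamma x := by
  rw [← Finset.Ico_add_one_right_eq_Icc, Finset.prod_Ico_eq_prod_range, Nat.add_sub_cancel]
  have h1 : ∀ i ∈ Finset.range m, (x + (m:ℝ) - ((1 + i : ℕ):ℝ)) = (x + m - 1 - i) := by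
    intro i _; push_cast; ring
  rw [Finset.prod_congr rfl h1, prod_shift m x hx]

lemma R1 (m : ℕ) : raney 2 (1/2) m =
    (1 / 2) * Gamma (2 * (m : ℝ) + 1 / 2) / ((Nat.factorial m : ℝ) * Gamma ((m : ℝ) + 3 / 2)) := by
  cases m with
  | zero =>
      have h : Gamma ((3:ℝ)/2) = (1/2) * Gamma (1/2) := by
        rw [show (3:ℝ)/2 = 1/2 + 1 by norm_num, Real.Gamma_add_one (by norm_num)]
      have h2 : Gamma ((1:ℝ)/2) ≠ 0 := (Real.Gamma_pos_of_pos (by norm_num)).ne'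
      simp only [raney, Nat.cast_zero]
      norm_num [h]
      field_simp
  | succ n =>
      have key : ∏ i ∈ Finset.Icc 1 n, (((n:ℝ) + 1) * 2 + 1/2 - (i:ℝ)) =
          Gamma (((n:ℝ) + 5/2) + n) / Gamma ((n:ℝ) + 5/2) := by
        rw [← icc_prod n ((n:ℝ) + 5/2) (by positivity)]
        exact Finset.prod_congr rfl (fun i _ => by ring)
      simp only [raney, key]
      push_cast
      rw [show 2*((n:ℝ)+1)+1/2 = ((n:ℝ)+5/2)+n by ring, show (n:ℝ)+1+3/2 = (n:ℝ)+5/2 by ring]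
      ring

lemma R2 (n : ℕ) : raney 2 1 n =
    ((Nat.factorial (2*n) : ℝ)) / ((Nat.factorial n : ℝ) * (Nat.factorial (n+1) : ℝ)) := by
  cases n with
  | zero => simp [raney]
  | succ k =>
      have key : ∏ i ∈ Finset.Icc 1 k, (((k:ℝ) + 1) * 2 + 1 - (i:ℝ)) =
          Gamma (((k:ℝ) + 3) + k) / Gamma ((k:ℝ) + 3) := by
        rw [← icc_prod k ((k:ℝ) + 3) (by positivity)]
        exact Finset.prod_congr rfl (fun i _ => by ring)
      have g1 : Gamma (((k:ℝ) + 3) + k) = (Nat.factorial (2*k+2) : ℝ) := by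
        rw [show ((k:ℝ) + 3) + k = ((2*k+2 : ℕ) : ℝ) + 1 by push_cast; ring,
          Real.Gamma_nat_eq_factorial]
      have g2 : Gamma ((k:ℝ) + 3) = (Nat.factorial (k+2) : ℝ) := by
        rw [show (k:ℝ) + 3 = ((k+2 : ℕ) : ℝ) + 1 by push_cast; ring,
          Real.Gamma_nat_eq_factorial]
      simp only [raney, key, g1, g2]
      rw [show 2*(k+1) = 2*k+2 by ring, show k+1+1 = k+2 by ring]
      ring


lemma core' (m : ℕ) : (4:ℝ)^m * Gamma (2*(m:ℝ)+1/2) *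
      ((Nat.factorial (2*m) : ℝ) * (Nat.factorial (2*m+1) : ℝ))
    = 2 * (Nat.factorial (4*m) : ℝ) * (Nat.factorial m : ℝ) * Gamma ((m:ℝ)+3/2) := by
  induction m with
  | zero =>
      have h : Gamma ((0:ℝ)+3/2) = (1/2) * Gamma (1/2) := by
        rw [show (0:ℝ)+3/2 = 1/2 + 1 by norm_num, Real.Gamma_add_one (by norm_num)]
      simp only [Nat.cast_zero, mul_zero, zero_add, pow_zero, Nat.mul_zero, Nat.factorial]
      rw [show (3:ℝ)/2 = 0+3/2 by norm_num, h]
      push_cast; ring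
  | succ m ih =>
      have f1 : (Nat.factorial (2*(m+1)) : ℝ) = (2*m+2)*(2*m+1)*(Nat.factorial (2*m) : ℝ) := by
        rw [show 2*(m+1) = (2*m+1)+1 by ring, Nat.factorial_succ, Nat.factorial_succ]
        push_cast; ring
      have f2 : (Nat.factorial (2*(m+1)+1) : ℝ) = (2*m+3)*(2*m+2)*(Nat.factorial (2*m+1) : ℝ) := by
        rw [show 2*(m+1)+1 = ((2*m+1)+1)+1 by ring, Nat.factorial_succ, Nat.factorial_succ]
        push_cast; ring
      have f3 : (Nat.factorial (4*(m+1)) : ℝ)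
          = (4*m+4)*(4*m+3)*(4*m+2)*(4*m+1)*(Nat.factorial (4*m) : ℝ) := by
        rw [show 4*(m+1) = (((4*m+1)+1)+1)+1 by ring, Nat.factorial_succ, Nat.factorial_succ,
          Nat.factorial_succ, Nat.factorial_succ]
        push_cast; ring
      have f4 : (Nat.factorial (m+1) : ℝ) = ((m:ℝ)+1)*(Nat.factorial m : ℝ) := by
        rw [Nat.factorial_succ]; push_cast; ring
      have g1 : Gamma (2*((m:ℝ)+1)+1/2) = (2*m+3/2)*(2*m+1/2)*Gamma (2*(m:ℝ)+1/2) := by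
        rw [show 2*((m:ℝ)+1)+1/2 = (2*(m:ℝ)+3/2) + 1 by ring,
          Real.Gamma_add_one (by positivity),
          show 2*(m:ℝ)+3/2 = (2*(m:ℝ)+1/2) + 1 by ring,
          Real.Gamma_add_one (by positivity)]
        ring
      have g2 : Gamma ((m:ℝ)+1+3/2) = ((m:ℝ)+3/2)*Gamma ((m:ℝ)+3/2) := by
        rw [show (m:ℝ)+1+3/2 = ((m:ℝ)+3/2) + 1 by ring, Real.Gamma_add_one (by positivity)]
      push_cast
      rw [g1, g2, f1, f2, f3, f4]
      linear_combination ((4*(m:ℝ)+3)*(4*m+1)*(2*m+2)*(2*m+1)*(2*m+3)*(2*m+2)) * ih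

lemma core (m : ℕ) : (4 : ℝ) ^ m *
        ((1 / 2) * Gamma (2 * (m : ℝ) + 1 / 2) /
          ((Nat.factorial m : ℝ) * Gamma ((m : ℝ) + 3 / 2)))
    = (Nat.factorial (4*m) : ℝ) / ((Nat.factorial (2*m) : ℝ) * (Nat.factorial (2*m+1) : ℝ)) := by
  have h1 : (Nat.factorial m : ℝ) ≠ 0 := Nat.cast_ne_zero.mpr m.factorial_ne_zero
  have h2 : Gamma ((m:ℝ)+3/2) ≠ 0 := (Real.Gamma_pos_of_pos (by positivity)).ne'
  have h3 : (Nat.factorial (2*m) : ℝ) ≠ 0 := Nat.cast_ne_zero.mpr (2*m).factorial_ne_zero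
  have h4 : (Nat.factorial (2*m+1) : ℝ) ≠ 0 := Nat.cast_ne_zero.mpr (2*m+1).factorial_ne_zero
  have hc := core' m
  set G1 := Gamma (2*(m:ℝ)+1/2) with hG1
  set G2 := Gamma ((m:ℝ)+3/2) with hG2
  field_simp
  linear_combination hc

lemma bridge (m : ℕ) :
    (Nat.choose (4 * m + 1) (2 * m) : ℝ) / (4 * (m : ℝ) + 1)
      = (Nat.factorial (4*m) : ℝ) / ((Nat.factorial (2*m) : ℝ) * (Nat.factorial (2*m+1) : ℝ)) := by
  have h := Nat.choose_mul_factorial_mul_factorial (show 2*m ≤ 4*m+1 by omega)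
  rw [show 4*m+1-2*m = 2*m+1 by omega, Nat.factorial_succ (4*m)] at h
  have h3 := congrArg (Nat.cast : ℕ → ℝ) h
  push_cast at h3
  have h1 : (Nat.factorial (2*m) : ℝ) ≠ 0 := Nat.cast_ne_zero.mpr (2*m).factorial_ne_zero
  have h4 : (Nat.factorial (2*m+1) : ℝ) ≠ 0 := Nat.cast_ne_zero.mpr (2*m+1).factorial_ne_zero
  have h5 : (4*(m:ℝ)+1) ≠ 0 := by positivity
  field_simp
  linear_combination h3

/-- For every natural `m`, `4^m·A_m(2,1/2) = A_{2m}(2,1)`; explicitly,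
`4^m·(1/2)·Γ(2m + 1/2)/(m!·Γ(m + 3/2)) = C(4m+1, 2m)/(4m+1)`. -/
theorem stmt_17 (m : ℕ) :
    (4 : ℝ) ^ m * raney 2 (1 / 2) m = raney 2 1 (2 * m) ∧
    (4 : ℝ) ^ m *
        ((1 / 2) * Gamma (2 * (m : ℝ) + 1 / 2) /
          ((Nat.factorial m : ℝ) * Gamma ((m : ℝ) + 3 / 2)))
      = (Nat.choose (4 * m + 1) (2 * m) : ℝ) / (4 * (m : ℝ) + 1) := by
  constructor
  · rw [R1, R2, show 2*(2*m) = 4*m by ring, show 2*m+1 = 2*m+1 by rfl]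
    exact core m
  · rw [core m, bridge m]
end

section
/- Let ν₁ be the probability measure on [0,1] with density 1/(π·√(x − x²)) (the arcsine distribution b(1, 1/2, 1)) and let ν₂ be Lebesgue measure on [0,1] (the distribution b(2, 1, 1)). Then the pushforward of the product measure ν₁ ⊗ ν₂ under the map (x, y) ↦ 4·x·y equals the Marchenko–Pastur measure μ(2,1), i.e. the measure on [0,4] with density (1/(2π))·√((4 − x)/x). -/
open MeasureTheory Real Set
open scoped ENNReal

noncomputable def cfun (x : ℝ) : ℝ := 1 / (π * Real.sqrt (x - x ^ 2)) * (4 * x)⁻¹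

lemma cfun_deriv {x : ℝ} (hx0 : 0 < x) (hx1 : x < 1) :
    HasDerivAt (fun x : ℝ => -(1 / (2 * π)) * Real.sqrt ((1 - x) / x)) (cfun x) x := by
  have h1x : (0:ℝ) < 1 - x := by linarith
  have hG : HasDerivAt (fun x : ℝ => (1 - x) / x)
      (((-1) * x - (1 - x) * 1) / x ^ 2) x :=
    (((hasDerivAt_id x).const_sub 1).div (hasDerivAt_id x) hx0.ne')
  have hGx : (1 - x) / x ≠ 0 := ne_of_gt (div_pos h1x hx0)
  have hs := (hG.sqrt hGx).const_mul (-(1 / (2 * π)))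
  refine hs.congr_deriv ?_; symm
  have hsq : Real.sqrt ((1 - x) / x) = Real.sqrt (1 - x) / Real.sqrt x :=
    Real.sqrt_div h1x.le x
  have hsm : Real.sqrt (x - x ^ 2) = Real.sqrt x * Real.sqrt (1 - x) := by
    rw [← Real.sqrt_mul hx0.le]; ring_nf
  have hsx : Real.sqrt x ≠ 0 := (Real.sqrt_pos.2 hx0).ne'
  have hs1 : Real.sqrt (1 - x) ≠ 0 := (Real.sqrt_pos.2 h1x).ne'
  have hsx2 : Real.sqrt x ^ 2 = x := Real.sq_sqrt hx0.le
  rw [cfun, hsm, hsq]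
  have hπ : π ≠ 0 := Real.pi_ne_zero
  field_simp
  ring_nf
  rw [hsx2]

lemma cfun_intble {a : ℝ} (ha0 : 0 < a) (ha1 : a < 1) :
    IntervalIntegrable cfun volume a 1 := by
  have hmeas : Measurable cfun := by unfold cfun; fun_prop
  have hbound : IntervalIntegrable
      (fun x : ℝ => (1 / (4 * π * a * Real.sqrt a)) * (1 - x) ^ (-(1/2) : ℝ)) volume a 1 := by
    have h1 : IntervalIntegrable (fun x : ℝ => x ^ (-(1/2) : ℝ)) volume 0 (1 - a) :=
      intervalIntegral.intervalIntegrable_rpow' (by norm_num)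
    have h2 := (h1.comp_sub_left 1)
    simp only [sub_sub_cancel, sub_zero] at h2
    exact (h2.symm.const_mul _)
  rw [intervalIntegrable_iff_integrableOn_Ioc_of_le ha1.le]
  rw [intervalIntegrable_iff_integrableOn_Ioc_of_le ha1.le] at hbound
  refine Integrable.mono hbound hmeas.aestronglyMeasurable ?_
  filter_upwards [ae_restrict_mem measurableSet_Ioc] with x hx
  have hx0 : 0 < x := lt_trans ha0 hx.1
  have h1x : 0 ≤ 1 - x := by linarith [hx.2]
  have hsm : Real.sqrt (x - x ^ 2) = Real.sqrt x * Real.sqrt (1 - x) := by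
    rw [← Real.sqrt_mul hx0.le]; ring_nf
  have hrp : (1 - x) ^ (-(1/2) : ℝ) = (Real.sqrt (1 - x))⁻¹ := by
    rw [Real.rpow_neg h1x, Real.sqrt_eq_rpow]
  rw [Real.norm_eq_abs, Real.norm_eq_abs, cfun, hsm, hrp]
  have hsa : 0 < Real.sqrt a := Real.sqrt_pos.2 ha0
  have hπ := Real.pi_pos
  have hcnn : 0 ≤ 1 / (π * (Real.sqrt x * Real.sqrt (1 - x))) * (4 * x)⁻¹ := by positivity
  rw [abs_of_nonneg hcnn, abs_of_nonneg (by positivity)]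
  rcases eq_or_lt_of_le h1x with h | h
  · rw [← h]; simp
  · have hs1 : 0 < Real.sqrt (1 - x) := Real.sqrt_pos.2 h
    have hsx : 0 < Real.sqrt x := Real.sqrt_pos.2 hx0
    have hax : Real.sqrt a ≤ Real.sqrt x := Real.sqrt_le_sqrt hx.1.le
    have e1 : 1 / (π * (Real.sqrt x * Real.sqrt (1 - x))) * (4 * x)⁻¹
        = 1 / (π * (Real.sqrt x * Real.sqrt (1 - x)) * (4 * x)) := by
      rw [one_div, one_div, ← mul_inv]
    have e2 : 1 / (4 * π * a * Real.sqrt a) * (Real.sqrt (1 - x))⁻¹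
        = 1 / (4 * π * a * Real.sqrt a * Real.sqrt (1 - x)) := by
      rw [one_div, one_div, ← mul_inv]
    rw [e1, e2]
    apply one_div_le_one_div_of_le (by positivity)
    have key : a * Real.sqrt a ≤ x * Real.sqrt x :=
      mul_le_mul hx.1.le hax hsa.le hx0.le
    nlinarith [mul_le_mul_of_nonneg_left key
      (by positivity : (0:ℝ) ≤ 4 * π * Real.sqrt (1 - x))]

lemma core_s19 (u : ℝ) (hu0 : 0 < u) (hu4 : u < 4) :
    ∫⁻ x in Set.Ico (u / 4) 1, ENNReal.ofReal (cfun x)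
      = ENNReal.ofReal (1 / (2 * π) * Real.sqrt ((4 - u) / u)) := by
  set a := u / 4 with ha
  have ha0 : 0 < a := by positivity
  have ha1 : a < 1 := by rw [ha]; linarith
  have hint := cfun_intble ha0 ha1
  -- FTC
  have hftc : ∫ x in a..1, cfun x = 1 / (2 * π) * Real.sqrt ((1 - a) / a) := by
    have := intervalIntegral.integral_eq_sub_of_hasDeriv_right_of_le ha1.le
      (f := fun x : ℝ => -(1 / (2 * π)) * Real.sqrt ((1 - x) / x))
      ?_ (fun x hx => (cfun_deriv (lt_trans ha0 hx.1) hx.2).hasDerivWithinAt) hint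
    · rw [this]
      simp only [sub_self, zero_div, Real.sqrt_zero, mul_zero, neg_zero, zero_sub,
        neg_neg, neg_mul, one_div]
    · exact continuousOn_const.mul (Real.continuous_sqrt.comp_continuousOn
        (ContinuousOn.div (by fun_prop) continuousOn_id
          (fun x hx => ne_of_gt (lt_of_lt_of_le ha0 hx.1))))
  -- convert lintegral to integral
  have hIcoIoc : (Set.Ico a 1 : Set ℝ) =ᵐ[volume] Set.Ioc a 1 := Ico_ae_eq_Ioc
  rw [MeasureTheory.setLIntegral_congr hIcoIoc]
  have hnn : 0 ≤ᵐ[volume.restrict (Set.Ioc a 1)] cfun := by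
    filter_upwards [ae_restrict_mem measurableSet_Ioc] with x hx
    have hx0 : 0 < x := lt_trans ha0 hx.1
    unfold cfun; positivity
  rw [← MeasureTheory.ofReal_integral_eq_lintegral_ofReal
      ((intervalIntegrable_iff_integrableOn_Ioc_of_le ha1.le).1 hint) hnn]
  rw [← intervalIntegral.integral_of_le ha1.le, hftc]
  have : (1 - a) / a = (4 - u) / u := by
    rw [ha]; field_simp
  rw [this]

/-- Let `ν₁` be the arcsine distribution `b(1,1/2,1)` on `[0,1]` (density
`1/(π·√(x − x²))`) and `ν₂` Lebesgue measure on `[0,1]` (the distribution `b(2,1,1)`).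
The pushforward of `ν₁ ⊗ ν₂` under `(x, y) ↦ 4·x·y` is the Marchenko–Pastur measure
`μ(2,1)`, i.e. the measure on `[0,4]` with density `(1/(2π))·√((4 − x)/x)`. -/
theorem stmt_19 :
    Measure.map (fun q : ℝ × ℝ => 4 * q.1 * q.2)
      ((volume.withDensity (fun x : ℝ =>
          ENNReal.ofReal (Set.indicator (Set.Ioo (0:ℝ) 1)
            (fun x : ℝ => 1 / (π * Real.sqrt (x - x ^ 2))) x))).prod
        (volume.restrict (Set.Icc (0:ℝ) 1)))
    = volume.withDensity (fun x : ℝ =>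
        ENNReal.ofReal (Set.indicator (Set.Ioo (0:ℝ) 4)
          (fun x : ℝ => (1 / (2 * π)) * Real.sqrt ((4 - x) / x)) x)) := by
  have hT : Measurable (fun q : ℝ × ℝ => 4 * q.1 * q.2) := by fun_prop
  have hfmeas : Measurable (fun x : ℝ =>
      ENNReal.ofReal (Set.indicator (Set.Ioo (0:ℝ) 1)
        (fun x : ℝ => 1 / (π * Real.sqrt (x - x ^ 2))) x)) := by
    apply Measurable.ennreal_ofReal
    exact Measurable.indicator (by fun_prop) measurableSet_Ioo
  ext s hs
  rw [Measure.map_apply hT hs, Measure.prod_apply (hT hs),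
    lintegral_withDensity_eq_lintegral_mul _ hfmeas
      (measurable_measure_prodMk_left (hT hs))]
  set A : Set (ℝ × ℝ) := {p : ℝ × ℝ | p.1 ∈ Set.Ioo (0:ℝ) 1 ∧ p.2 ∈ s ∧ 0 ≤ p.2 ∧ p.2 ≤ 4 * p.1}
    with hAdef
  have hA : MeasurableSet A :=
    (measurable_fst measurableSet_Ioo).inter ((measurable_snd hs).inter
      ((measurableSet_le measurable_const measurable_snd).inter
        (measurableSet_le measurable_snd (by fun_prop))))
  set Ψ : ℝ × ℝ → ℝ≥0∞ := A.indicator (fun p => ENNReal.ofReal (cfun p.1)) with hΨdef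
  have hΨmeas : Measurable Ψ := by
    apply Measurable.indicator _ hA
    apply Measurable.ennreal_ofReal
    have : Measurable cfun := by unfold cfun; fun_prop
    exact this.comp measurable_fst
  have key : ∀ x : ℝ, ((fun x : ℝ =>
      ENNReal.ofReal (Set.indicator (Set.Ioo (0:ℝ) 1)
        (fun x : ℝ => 1 / (π * Real.sqrt (x - x ^ 2))) x)) *
      (fun x : ℝ => (volume.restrict (Set.Icc (0:ℝ) 1))
        (Prod.mk x ⁻¹' ((fun q : ℝ × ℝ => 4 * q.1 * q.2) ⁻¹' s)))) x
      = ∫⁻ u, Ψ (x, u) := by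
    intro x
    simp only [Pi.mul_apply]
    by_cases hx : x ∈ Set.Ioo (0:ℝ) 1
    · have hx4 : (0:ℝ) < 4 * x := by have := hx.1; linarith
      rw [Set.indicator_of_mem hx]
      have hKval : (volume.restrict (Set.Icc (0:ℝ) 1))
          (Prod.mk x ⁻¹' ((fun q : ℝ × ℝ => 4 * q.1 * q.2) ⁻¹' s))
          = ENNReal.ofReal ((4 * x)⁻¹) * volume (s ∩ Set.Icc 0 (4 * x)) := by
        rw [Measure.restrict_apply' measurableSet_Icc]
        have hset : (Prod.mk x ⁻¹' ((fun q : ℝ × ℝ => 4 * q.1 * q.2) ⁻¹' s)) ∩ Set.Icc 0 1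
            = (fun y : ℝ => 4 * x * y) ⁻¹' (s ∩ Set.Icc 0 (4 * x)) := by
          ext y
          simp only [Set.mem_inter_iff, Set.mem_preimage, Set.mem_Icc, Set.mem_setOf_eq]
          constructor
          · rintro ⟨h1, h2, h3⟩
            exact ⟨h1, mul_nonneg hx4.le h2, by nlinarith⟩
          · rintro ⟨h1, h2, h3⟩
            refine ⟨h1, ?_, ?_⟩ <;> nlinarith
        rw [hset, Real.volume_preimage_mul_left (ne_of_gt hx4),
          abs_of_pos (inv_pos.2 hx4)]
      rw [hKval]
      have hup : ∀ u : ℝ, Ψ (x, u) = ENNReal.ofReal (cfun x) *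
          (s ∩ Set.Icc 0 (4 * x)).indicator 1 u := by
        intro u
        by_cases hu : u ∈ s ∩ Set.Icc 0 (4 * x)
        · have hmem : (x, u) ∈ A := ⟨hx, hu.1, hu.2.1, hu.2.2⟩
          rw [hΨdef, Set.indicator_of_mem hmem,
            Set.indicator_of_mem hu, Pi.one_apply, mul_one]
        · have hnm : (x, u) ∉ A := fun h => hu ⟨h.2.1, h.2.2.1, h.2.2.2⟩
          rw [hΨdef, Set.indicator_of_notMem hnm,
            Set.indicator_of_notMem hu, mul_zero]
      rw [lintegral_congr hup,
        lintegral_const_mul _ (measurable_one.indicator (hs.inter measurableSet_Icc)),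
        lintegral_indicator_one (hs.inter measurableSet_Icc),
        ← mul_assoc, ← ENNReal.ofReal_mul (by positivity)]
      rfl
    · rw [Set.indicator_of_notMem hx]
      simp only [ENNReal.ofReal_zero, zero_mul]
      symm
      have : ∀ u : ℝ, Ψ (x, u) = 0 := fun u =>
        Set.indicator_of_notMem (fun h : (x, u) ∈ A => hx h.1) _
      simp only [this, lintegral_zero]
  rw [lintegral_congr key,
    lintegral_lintegral_swap (f := fun x u => Ψ (x, u)) (by exact hΨmeas.aemeasurable)]
  set gfun : ℝ → ℝ≥0∞ := fun u => ENNReal.ofReal (Set.indicator (Set.Ioo (0:ℝ) 4)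
      (fun u : ℝ => (1 / (2 * π)) * Real.sqrt ((4 - u) / u)) u) with hgdef
  have key2 : ∀ u : ℝ, u ≠ 0 → ∫⁻ x, Ψ (x, u) = s.indicator gfun u := by
    intro u hu0
    by_cases hus : u ∈ s
    · rw [Set.indicator_of_mem hus]
      rcases lt_or_gt_of_ne hu0 with hneg | hpos
      · have hz : ∀ x : ℝ, Ψ (x, u) = 0 := fun x =>
          Set.indicator_of_notMem (fun h => absurd h.2.2.1 (not_le.2 hneg)) _
        simp only [hz, lintegral_zero, hgdef]
        rw [Set.indicator_of_notMem (fun h => absurd h.1 (not_lt.2 hneg.le))]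
        simp
      · by_cases hu4 : u < 4
        · have hset : ∀ x : ℝ, Ψ (x, u)
              = (Set.Ico (u / 4) 1).indicator (fun x => ENNReal.ofReal (cfun x)) x := by
            intro x
            by_cases hx : x ∈ Set.Ico (u / 4) 1
            · have hmem : (x, u) ∈ A := ⟨⟨lt_of_lt_of_le (by positivity) hx.1, hx.2⟩,
                hus, hpos.le, by have := hx.1; linarith⟩
              rw [Set.indicator_of_mem hx, hΨdef, Set.indicator_of_mem hmem]
            · have hnm : (x, u) ∉ A := by
                rintro ⟨h1, _, _, h4⟩
                exact hx ⟨by linarith, h1.2⟩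
              rw [Set.indicator_of_notMem hx, hΨdef, Set.indicator_of_notMem hnm]
          have hmem : u ∈ Set.Ioo (0:ℝ) 4 := ⟨hpos, hu4⟩
          rw [lintegral_congr hset, lintegral_indicator measurableSet_Ico,
            core_s19 u hpos hu4]
          simp only [hgdef, Set.indicator_of_mem hmem]
        · have hz : ∀ x : ℝ, Ψ (x, u) = 0 := fun x =>
            Set.indicator_of_notMem
              (fun h : (x, u) ∈ A =>
                hu4 (by have h1 := h.1.2; have h2 := h.2.2.2; linarith)) _
          have hnm : u ∉ Set.Ioo (0:ℝ) 4 := fun h => hu4 h.2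
          simp only [hz, lintegral_zero, hgdef, Set.indicator_of_notMem hnm,
            ENNReal.ofReal_zero]
    · rw [Set.indicator_of_notMem hus]
      have hz : ∀ x : ℝ, Ψ (x, u) = 0 := fun x =>
        Set.indicator_of_notMem (fun h : (x, u) ∈ A => hus h.2.1) _
      simp only [hz, lintegral_zero]
  have h0 : ∀ᵐ u : ℝ, u ≠ 0 := by
    rw [ae_iff]
    simp only [ne_eq, not_not, Set.setOf_eq_eq_singleton]
    exact Real.volume_singleton
  rw [lintegral_congr_ae (h0.mono fun u hu => key2 u hu),
    lintegral_indicator hs, withDensity_apply _ hs]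
end
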